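/- arXiv:1804.00764 — 9 statements merged into one kernel-verified Lean document; each statement's English description precedes it below -/
import Mathlib

section
/- For every t ∈ (0,1), P(X_k ≥ t) → 1 as k → ∞. -/
open MeasureTheory ProbabilityTheory Filter

lemma cpdo_r_lt_one : (Real.sqrt 0.99 + Real.sqrt 1.01) / 2 < 1 := by
  have h1 : Real.sqrt 0.99 ^ 2 = 0.99 := Real.sq_sqrt (by norm_num)
  have h2 : Real.sqrt 1.01 ^ 2 = 1.01 := Real.sq_sqrt (by norm_num)
  have h3 : (0:ℝ) ≤ Real.sqrt 0.99 := Real.sqrt_nonneg _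
  have h4 : (0:ℝ) ≤ Real.sqrt 1.01 := Real.sqrt_nonneg _
  nlinarith [sq_nonneg (Real.sqrt 0.99 * Real.sqrt 1.01 - 1),
    sq_nonneg (Real.sqrt 0.99 + Real.sqrt 1.01), mul_nonneg h3 h4]

/-- For the CPDO net capital driven by i.i.d. fair signs with `δ = 0.01`:
for every `t ∈ (0,1)`, `P(X k ≥ t) → 1` as `k → ∞`. -/
theorem cpdo_eventual_near_cash_in
    {Ω : Type*} [MeasureSpace Ω] [IsProbabilityMeasure (ℙ : Measure Ω)]
    (δ : ℝ) (hδ : δ = 0.01)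
    (C : ℕ → Ω → ℝ)
    (hMeas : ∀ j, Measurable (C j))
    (hIndep : iIndepFun C ℙ)
    (hHead : ∀ j, ℙ {ω | C j ω = 1} = 1/2)
    (hTail : ∀ j, ℙ {ω | C j ω = -1} = 1/2)
    (X : ℕ → Ω → ℝ)
    (hX : ∀ (k : ℕ) (ω : Ω), X k ω = 1 - ∏ j ∈ Finset.Icc 1 k, (1 - δ * C j ω)) :
    ∀ t : ℝ, t ∈ Set.Ioo (0 : ℝ) 1 →
      Tendsto (fun k : ℕ => ℙ {ω | t ≤ X k ω}) atTop (nhds 1) := by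
  intro t ht
  subst hδ
  -- the square-root variables
  set f : ℕ → Ω → ℝ := fun j ω => Real.sqrt (1 - 0.01 * C j ω) with hf
  have hfMeas : ∀ j, Measurable (f j) := fun j =>
    (measurable_const.sub (measurable_const.mul (hMeas j))).sqrt
  have hfIndep : iIndepFun f ℙ := by
    have := hIndep.comp (fun _ (x : ℝ) => Real.sqrt (1 - 0.01 * x))
      (fun _ => (measurable_const.sub (measurable_const.mul measurable_id)).sqrt)
    exact this
  -- a.e. the signs are ±1
  have haej : ∀ j, ∀ᵐ ω ∂(ℙ : Measure Ω), C j ω = 1 ∨ C j ω = -1 := by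
    intro j
    have hA : MeasurableSet {ω | C j ω = 1} := hMeas j (measurableSet_singleton 1)
    have hB : MeasurableSet {ω | C j ω = -1} := hMeas j (measurableSet_singleton (-1))
    have hdisj : Disjoint {ω | C j ω = 1} {ω | C j ω = -1} := by
      rw [Set.disjoint_left]; intro ω h1 h2
      simp only [Set.mem_setOf_eq] at h1 h2; rw [h1] at h2; norm_num at h2
    have hsum : ℙ ({ω | C j ω = 1} ∪ {ω | C j ω = -1}) = 1 := by
      rw [measure_union hdisj hB, hHead j, hTail j, ENNReal.div_add_div_same,
        one_add_one_eq_two, ENNReal.div_self (by norm_num) (by norm_num)]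
    have hnull : ℙ {ω | ¬(C j ω = 1 ∨ C j ω = -1)} = 0 := by
      have heqs : {ω | ¬(C j ω = 1 ∨ C j ω = -1)}
          = ({ω | C j ω = 1} ∪ {ω | C j ω = -1})ᶜ := by
        ext ω; simp [not_or]
      rw [heqs, prob_compl_eq_one_sub (hA.union hB), hsum]; simp
    exact MeasureTheory.ae_iff.mpr hnull
  have hae : ∀ᵐ ω ∂(ℙ : Measure Ω), ∀ j, C j ω = 1 ∨ C j ω = -1 :=
    MeasureTheory.ae_all_iff.mpr haej
  set r : ℝ := (Real.sqrt 0.99 + Real.sqrt 1.01) / 2 with hr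
  have hr0 : 0 ≤ r := by positivity
  have hr1 : r < 1 := cpdo_r_lt_one
  -- integral of each f j
  have hint : ∀ j, ∫ ω, f j ω ∂ℙ = r := by
    intro j
    have hA : MeasurableSet {ω | C j ω = 1} := hMeas j (measurableSet_singleton 1)
    have hB : MeasurableSet {ω | C j ω = -1} := hMeas j (measurableSet_singleton (-1))
    set g : Ω → ℝ := fun ω => Set.indicator {ω | C j ω = 1} (fun _ => Real.sqrt 0.99) ω
      + Set.indicator {ω | C j ω = -1} (fun _ => Real.sqrt 1.01) ω with hg
    have hfg : f j =ᵐ[ℙ] g := by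
      filter_upwards [haej j] with ω hω
      rcases hω with h | h
      · have hω2 : ω ∉ {ω | C j ω = -1} := by
          simp only [Set.mem_setOf_eq, h]; norm_num
        simp only [hg, Set.indicator_of_mem (by exact h : ω ∈ {ω | C j ω = 1}),
          Set.indicator_of_notMem hω2, add_zero, hf, h]
        norm_num
      · have hω2 : ω ∉ {ω | C j ω = 1} := by
          simp only [Set.mem_setOf_eq, h]; norm_num
        simp only [hg, Set.indicator_of_mem (by exact h : ω ∈ {ω | C j ω = -1}),
          Set.indicator_of_notMem hω2, zero_add, hf, h]
        norm_num
    rw [integral_congr_ae hfg, hg]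
    rw [integral_add ((integrable_const _).indicator hA) ((integrable_const _).indicator hB),
      integral_indicator_const _ hA, integral_indicator_const _ hB, measureReal_def, measureReal_def, hHead j, hTail j]
    simp only [smul_eq_mul]
    rw [ENNReal.toReal_div]
    simp [hr]
    ring
  -- integral of product of independent functions
  have hkey : ∀ s : Finset ℕ, ∫ ω, ∏ j ∈ s, f j ω ∂ℙ = ∏ j ∈ s, ∫ ω, f j ω ∂ℙ := by
    intro s
    induction s using Finset.induction_on with
    | empty => simp
    | @insert i s hi ih =>
      have hindep : IndepFun (f i) (∏ j ∈ s, f j) ℙ :=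
        (hfIndep.indepFun_finsetProd_of_notMem hfMeas hi).symm
      have hps : (∏ j ∈ s, f j) = fun ω => ∏ j ∈ s, f j ω :=
        funext fun ω => Finset.prod_apply ω s f
      have heq : (fun ω => ∏ j ∈ insert i s, f j ω)
          = fun ω => f i ω * (∏ j ∈ s, f j) ω := by
        funext ω; simp [Finset.prod_insert hi]
      rw [heq, hindep.integral_fun_mul_eq_mul_integral (hfMeas i).aestronglyMeasurable
        (by rw [hps]; exact (Finset.measurable_prod s
          (fun j _ => hfMeas j)).aestronglyMeasurable)]
      rw [hps, ih, Finset.prod_insert hi]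
  obtain ⟨ht0, ht1⟩ := ht
  set ε : ℝ := Real.sqrt (1 - t) with hε
  have hε0 : 0 < ε := Real.sqrt_pos.mpr (by linarith)
  -- the bad event
  set bad : ℕ → Set Ω := fun k => {ω | X k ω < t} with hbad
  have hXmeas : ∀ k, Measurable (X k) := by
    intro k
    have : X k = fun ω => 1 - ∏ j ∈ Finset.Icc 1 k, (1 - 0.01 * C j ω) := funext (hX k)
    rw [this]
    exact measurable_const.sub
      (Finset.measurable_prod _ (fun j _ => measurable_const.sub
        (measurable_const.mul (hMeas j))))
  have hbadMeas : ∀ k, MeasurableSet (bad k) := fun k =>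
    measurableSet_lt (hXmeas k) measurable_const
  -- bound on bad event measure
  have hbound : ∀ k : ℕ, ℙ (bad k) ≤ ENNReal.ofReal (r ^ k / ε) := by
    intro k
    set F : Ω → ℝ := fun ω => ∏ j ∈ Finset.Icc 1 k, f j ω with hF
    have hFnonneg : ∀ ω, 0 ≤ F ω :=
      fun ω => Finset.prod_nonneg fun j _ => Real.sqrt_nonneg _
    have hFmeas : Measurable F := Finset.measurable_prod _ (fun j _ => hfMeas j)
    have hFint : Integrable F ℙ := by
      refine Integrable.mono' (integrable_const ((Real.sqrt 1.01) ^ k))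
        hFmeas.aestronglyMeasurable ?_
      filter_upwards [hae] with ω hω
      rw [Real.norm_of_nonneg (hFnonneg ω)]
      calc F ω ≤ ∏ _j ∈ Finset.Icc 1 k, Real.sqrt 1.01 := by
            refine Finset.prod_le_prod (fun j _ => Real.sqrt_nonneg _) (fun j _ => ?_)
            rcases hω j with h | h <;>
              · rw [hf]; simp only [h]
                apply Real.sqrt_le_sqrt; norm_num
        _ = Real.sqrt 1.01 ^ k := by
            rw [Finset.prod_const, Nat.card_Icc]; norm_num
    have hFsq : ∀ᵐ ω ∂(ℙ : Measure Ω),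
        F ω ^ 2 = ∏ j ∈ Finset.Icc 1 k, (1 - 0.01 * C j ω) := by
      filter_upwards [hae] with ω hω
      rw [hF, ← Finset.prod_pow]
      refine Finset.prod_congr rfl (fun j _ => ?_)
      rw [hf]
      exact Real.sq_sqrt (by rcases hω j with h | h <;> (rw [h]; norm_num))
    have hsub : ∀ᵐ ω ∂(ℙ : Measure Ω), ω ∈ bad k → ω ∈ {ω | ε ≤ F ω} := by
      filter_upwards [hFsq] with ω hsq hmem
      simp only [hbad, Set.mem_setOf_eq, hX k ω] at hmem
      have h1 : 1 - t < F ω ^ 2 := by rw [hsq]; linarith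
      have : ε ≤ Real.sqrt (F ω ^ 2) := Real.sqrt_le_sqrt (le_of_lt h1)
      rwa [Real.sqrt_sq (hFnonneg ω)] at this
    have hmono : ℙ (bad k) ≤ ℙ {ω | ε ≤ F ω} := measure_mono_ae hsub
    have hmarkov : ε * (ℙ {ω | ε ≤ F ω}).toReal ≤ ∫ ω, F ω ∂ℙ :=
      mul_meas_ge_le_integral_of_nonneg
        (Filter.Eventually.of_forall hFnonneg) hFint ε
    have hintF : ∫ ω, F ω ∂ℙ = r ^ k := by
      rw [hF, hkey]
      rw [Finset.prod_congr rfl (fun j _ => hint j), Finset.prod_const, Nat.card_Icc]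
      norm_num
    rw [hintF] at hmarkov
    calc ℙ (bad k) ≤ ℙ {ω | ε ≤ F ω} := hmono
      _ ≤ ENNReal.ofReal (r ^ k / ε) := by
          rw [ENNReal.le_ofReal_iff_toReal_le (measure_ne_top _ _)
            (by positivity)]
          rw [le_div_iff₀ hε0]
          linarith [hmarkov]
  -- bad probability tends to 0
  have hbad0 : Tendsto (fun k => ℙ (bad k)) atTop (nhds 0) := by
    have h1 : Tendsto (fun k : ℕ => ENNReal.ofReal (r ^ k / ε)) atTop (nhds 0) := by
      have : Tendsto (fun k : ℕ => r ^ k / ε) atTop (nhds 0) := by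
        have := tendsto_pow_atTop_nhds_zero_of_lt_one hr0 hr1
        simpa using this.div_const ε
      have := (ENNReal.continuous_ofReal.tendsto 0).comp this
      simpa [Function.comp_def] using this
    exact tendsto_of_tendsto_of_tendsto_of_le_of_le tendsto_const_nhds h1
      (fun k => zero_le) hbound
  -- conclude
  have hcompl : ∀ k, ℙ {ω | t ≤ X k ω} = 1 - ℙ (bad k) := by
    intro k
    have : {ω | t ≤ X k ω} = (bad k)ᶜ := by
      ext ω; simp [hbad, not_lt]
    rw [this, prob_compl_eq_one_sub (hbadMeas k)]
  simp only [hcompl]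
  have := ENNReal.Tendsto.sub (tendsto_const_nhds (x := (1 : ENNReal)) (f := atTop))
    hbad0 (Or.inl (by norm_num))
  simpa using this
end

section
/- For every integer m with 1 ≤ m ≤ 199, P(X_{2m} < 0) = 1/2 - (1/2^{2m+1}) · C(2m, m), where C(2m, m) is the binomial coefficient. -/
lemma cpdo_sum_choose (m : ℕ) (hm : 1 ≤ m) :
    2 * (∑ k ∈ Finset.Icc (m+1) (2*m), (2*m).choose k) + (2*m).choose m = 2^(2*m) := by
  have htot : ∑ k ∈ Finset.range (2*m+1), (2*m).choose k = 2^(2*m) := Nat.sum_range_choose (2*m)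
  have hsplit : ∑ k ∈ Finset.range (2*m+1), (2*m).choose k
      = ∑ k ∈ Finset.range m, (2*m).choose k + ∑ k ∈ Finset.Ico m (2*m+1), (2*m).choose k := by
    rw [Finset.range_eq_Ico, ← Finset.sum_Ico_consecutive _ (Nat.zero_le m) (by omega), Finset.range_eq_Ico]
  have hbot : ∑ k ∈ Finset.Ico m (2*m+1), (2*m).choose k
      = (2*m).choose m + ∑ k ∈ Finset.Ico (m+1) (2*m+1), (2*m).choose k :=
    Finset.sum_eq_sum_Ico_succ_bot (by omega) _
  have hIcc : Finset.Icc (m+1) (2*m) = Finset.Ico (m+1) (2*m+1) := by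
    rw [Finset.Ico_add_one_right_eq_Icc]
  have hrefl : ∑ k ∈ Finset.Ico (m+1) (2*m+1), (2*m).choose k
      = ∑ k ∈ Finset.range m, (2*m).choose k := by
    rw [Finset.sum_Ico_eq_sum_range]
    have h2 : 2*m+1 - (m+1) = m := by omega
    rw [h2]
    rw [← Finset.sum_range_reflect (fun j => (2*m).choose (m+1+j)) m]
    apply Finset.sum_congr rfl
    intro j hj
    simp only [Finset.mem_range] at hj
    have h1 : m + 1 + (m - 1 - j) = 2*m - j := by omega
    rw [h1, Nat.choose_symm (by omega)]
  rw [hsplit, hbot, hrefl] at htot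
  rw [hIcc, hrefl]
  omega

private lemma pow_decomp1 (b c : ℕ) : (1.01:ℝ)^(c+b) * 0.99^b = 1.01^c * 0.9999^b := by
  rw [pow_add, mul_assoc, ← mul_pow]; norm_num

private lemma pow_decomp2 (a d : ℕ) : (1.01:ℝ)^a * 0.99^(a+d) = 0.9999^a * 0.99^d := by
  rw [pow_add, ← mul_assoc, ← mul_pow]; norm_num

lemma cpdo_prod_gt_one (m a : ℕ) (hm1 : 1 ≤ m) (hm2 : m ≤ 199) (ha : a ≤ 2*m) :
    1 < (1.01:ℝ)^a * 0.99^(2*m-a) ↔ m < a := by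
  by_cases h : m < a
  · simp only [h, iff_true]
    have hb : 2*m - a ≤ 198 := by omega
    have hab : 2 ≤ a - (2*m-a) := by omega
    have hdecomp : (1.01:ℝ)^a * 0.99^(2*m-a)
        = (1.01:ℝ)^(a - (2*m-a)) * 0.9999^(2*m-a) := by
      have h3 : a = (a - (2*m-a)) + (2*m-a) := by omega
      calc (1.01:ℝ)^a * 0.99^(2*m-a)
          = (1.01:ℝ)^((a - (2*m-a)) + (2*m-a)) * 0.99^(2*m-a) := by rw [← h3]
        _ = _ := pow_decomp1 _ _
    rw [hdecomp]
    have h1 : (1.01:ℝ)^2 ≤ (1.01:ℝ)^(a - (2*m-a)) := by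
      apply pow_le_pow_right₀ (by norm_num) hab
    have h2 : (0.9999:ℝ)^198 ≤ (0.9999:ℝ)^(2*m-a) := by
      apply pow_le_pow_of_le_one (by norm_num) (by norm_num) hb
    have hbase : (1:ℝ) < (1.01:ℝ)^2 * 0.9999^198 := by norm_num
    calc (1:ℝ) < (1.01:ℝ)^2 * 0.9999^198 := hbase
      _ ≤ (1.01:ℝ)^(a - (2*m-a)) * 0.9999^(2*m-a) := by
          apply mul_le_mul h1 h2 (by positivity) (by positivity)
  · simp only [h, iff_false, not_lt]
    push_neg at h
    have hdecomp : (1.01:ℝ)^a * 0.99^(2*m-a)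
        = (0.9999:ℝ)^a * 0.99^(2*m-2*a) := by
      have h3 : 2*m - a = a + (2*m-2*a) := by omega
      rw [h3, pow_decomp2]
    rw [hdecomp]
    rcases Nat.eq_zero_or_pos a with h0 | h0
    · subst h0
      simp only [pow_zero, one_mul, Nat.mul_zero, Nat.sub_zero]
      have : (0.99:ℝ)^(2*m) < 1 := by
        apply pow_lt_one₀ (by norm_num) (by norm_num) (by omega)
      linarith
    · have h1 : (0.9999:ℝ)^a < 1 := pow_lt_one₀ (by norm_num) (by norm_num) (by omega)
      have h2 : (0.99:ℝ)^(2*m-2*a) ≤ 1 := pow_le_one₀ (by norm_num) (by norm_num)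
      nlinarith [pow_pos (show (0:ℝ) < 0.9999 by norm_num) a]

open MeasureTheory ProbabilityTheory
open scoped ENNReal

/-- For the CPDO net capital driven by i.i.d. fair signs with `δ = 0.01`:
for every `1 ≤ m ≤ 199`, `P(X (2m) < 0) = 1/2 - (1/2^(2m+1)) · C(2m, m)`. -/
theorem cpdo_even_loss_probability
    {Ω : Type*} [MeasureSpace Ω] [IsProbabilityMeasure (ℙ : Measure Ω)]
    (δ : ℝ) (hδ : δ = 0.01)
    (C : ℕ → Ω → ℝ)
    (hMeas : ∀ j, Measurable (C j))
    (hIndep : iIndepFun C ℙ)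
    (hHead : ∀ j, ℙ {ω | C j ω = 1} = 1/2)
    (hTail : ∀ j, ℙ {ω | C j ω = -1} = 1/2)
    (X : ℕ → Ω → ℝ)
    (hX : ∀ (k : ℕ) (ω : Ω), X k ω = 1 - ∏ j ∈ Finset.Icc 1 k, (1 - δ * C j ω)) :
    ∀ m : ℕ, 1 ≤ m → m ≤ 199 →
      (ℙ {ω | X (2 * m) ω < 0}).toReal
        = 1 / 2 - (1 / 2 ^ (2 * m + 1)) * (Nat.choose (2 * m) m : ℝ) := by
  classical
  subst hδ
  intro m hm1 hm2
  set I : Finset ℕ := Finset.Icc 1 (2*m) with hI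
  have hIcard : I.card = 2*m := by simp [hI]
  -- preimage rewrites
  have hpre1 : ∀ j, C j ⁻¹' ({1} : Set ℝ) = {ω | C j ω = 1} := fun j => rfl
  have hpre2 : ∀ j, C j ⁻¹' ({-1} : Set ℝ) = {ω | C j ω = -1} := fun j => rfl
  -- the atomic events
  set A : Finset ℕ → Set Ω :=
    fun S => ⋂ j ∈ I, C j ⁻¹' (if j ∈ S then ({-1} : Set ℝ) else {1}) with hA
  have hA_mem : ∀ S ω, ω ∈ A S ↔ ∀ j ∈ I, C j ω = if j ∈ S then -1 else 1 := by
    intro S ω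
    simp only [hA, Set.mem_iInter, Set.mem_preimage]
    constructor
    · intro h j hj
      have := h j hj
      split_ifs at this ⊢ <;> simpa using this
    · intro h j hj
      have := h j hj
      split_ifs at this ⊢ <;> simp [this]
  have hA_meas : ∀ S, MeasurableSet (A S) := by
    intro S
    apply MeasurableSet.biInter (Set.to_countable _)
    intro j _
    refine (hMeas j) ?_
    by_cases h : j ∈ S <;> simp [h]
  have hA_prob : ∀ S, ℙ (A S) = (1/2 : ℝ≥0∞)^(2*m) := by
    intro S
    have h := hIndep.measure_inter_preimage_eq_mul I
      (sets := fun j => if j ∈ S then ({-1} : Set ℝ) else {1})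
      (fun i _ => by by_cases h : i ∈ S <;> simp [h])
    rw [hA]
    rw [h]
    rw [← hIcard, ← Finset.prod_const]
    apply Finset.prod_congr rfl
    intro j _
    by_cases h : j ∈ S
    · simp only [h, if_true]; rw [hpre2, hTail]
    · simp only [h, if_false]; rw [hpre1, hHead]
  -- the good event
  set G : Set Ω := ⋂ j ∈ I, (C j ⁻¹' {1} ∪ C j ⁻¹' {-1}) with hG
  have hG_mem : ∀ ω, ω ∈ G ↔ ∀ j ∈ I, C j ω = 1 ∨ C j ω = -1 := by
    intro ω; simp [hG]
  have hD_meas : ∀ j : ℕ, MeasurableSet (C j ⁻¹' ({1} : Set ℝ) ∪ C j ⁻¹' {-1}) :=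
    fun j => ((hMeas j) (measurableSet_singleton _)).union ((hMeas j) (measurableSet_singleton _))
  have hG_meas : MeasurableSet G :=
    MeasurableSet.biInter (Set.to_countable _) (fun j _ => hD_meas j)
  have hGc : ℙ Gᶜ = 0 := by
    have hDone : ∀ j : ℕ, ℙ (C j ⁻¹' ({1} : Set ℝ) ∪ C j ⁻¹' {-1}) = 1 := by
      intro j
      rw [measure_union ?_ ((hMeas j) (measurableSet_singleton _))]
      · rw [hpre1, hpre2, hHead, hTail]
        exact ENNReal.add_halves 1
      · rw [Set.disjoint_left]
        intro ω h1 h2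
        rw [Set.mem_preimage, Set.mem_singleton_iff] at h1 h2
        norm_num [h1] at h2
    have : Gᶜ = ⋃ j ∈ I, (C j ⁻¹' ({1} : Set ℝ) ∪ C j ⁻¹' {-1})ᶜ := by
      simp [hG, Set.compl_iInter]
    rw [this]
    refine le_antisymm ?_ zero_le
    calc ℙ (⋃ j ∈ I, (C j ⁻¹' ({1} : Set ℝ) ∪ C j ⁻¹' {-1})ᶜ)
        ≤ ∑ j ∈ I, ℙ ((C j ⁻¹' ({1} : Set ℝ) ∪ C j ⁻¹' {-1})ᶜ) := measure_biUnion_finset_le I _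
      _ = 0 := by
          apply Finset.sum_eq_zero
          intro j _
          rw [prob_compl_eq_zero_iff (hD_meas j)]
          exact hDone j
  have hG_one : ℙ G = 1 := by
    rwa [prob_compl_eq_zero_iff hG_meas] at hGc
  -- the product formula
  have hprod : ∀ (ω : Ω) (S : Finset ℕ), S ⊆ I →
      (∀ j ∈ I, C j ω = if j ∈ S then -1 else 1) →
      ∏ j ∈ I, (1 - 0.01 * C j ω) = (1.01:ℝ)^S.card * 0.99^(2*m - S.card) := by
    intro ω S hSI hω
    have hstep : ∏ j ∈ I, (1 - 0.01 * C j ω)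
        = ∏ j ∈ I, (if j ∈ S then (1.01:ℝ) else 0.99) := by
      apply Finset.prod_congr rfl
      intro j hj
      rw [hω j hj]
      split_ifs <;> norm_num
    rw [hstep, ← Finset.prod_filter_mul_prod_filter_not I (fun j => j ∈ S)]
    have hfil : I.filter (fun j => j ∈ S) = S := by
      ext j
      simp only [Finset.mem_filter]
      exact ⟨fun h => h.2, fun h => ⟨hSI h, h⟩⟩
    have hcard2 : (I.filter (fun j => ¬ j ∈ S)).card = 2*m - S.card := by
      have := Finset.card_filter_add_card_filter_not (s := I) (fun j => j ∈ S)
      rw [hfil] at this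
      omega
    rw [hfil]
    have e1 : ∏ x ∈ S, (if x ∈ S then (1.01:ℝ) else 0.99) = 1.01 ^ S.card := by
      rw [Finset.prod_congr rfl (fun x hx => if_pos hx), Finset.prod_const]
    have e2 : (∏ x ∈ I.filter (fun j => ¬ j ∈ S), (if x ∈ S then (1.01:ℝ) else 0.99))
        = 0.99 ^ (2*m - S.card) := by
      rw [Finset.prod_congr rfl (fun x hx => if_neg (Finset.mem_filter.mp hx).2),
        Finset.prod_const, hcard2]
    rw [e1, e2]
  -- the key event identity
  set T : Finset (Finset ℕ) := I.powerset.filter (fun S => m < S.card) with hT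
  have hkey : {ω | X (2*m) ω < 0} ∩ G = ⋃ S ∈ T, A S := by
    ext ω
    simp only [Set.mem_inter_iff, Set.mem_setOf_eq, Set.mem_iUnion]
    constructor
    · rintro ⟨hXneg, hωG⟩
      rw [hG_mem] at hωG
      set S : Finset ℕ := I.filter (fun j => C j ω = -1) with hS
      have hSI : S ⊆ I := Finset.filter_subset _ _
      have hvals : ∀ j ∈ I, C j ω = if j ∈ S then -1 else 1 := by
        intro j hj
        by_cases hjS : j ∈ S
        · simp only [hjS, if_true]
          exact (Finset.mem_filter.mp hjS).2
        · simp only [hjS, if_false]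
          rcases hωG j hj with h1 | h2
          · exact h1
          · exact absurd (Finset.mem_filter.mpr ⟨hj, h2⟩) hjS
      have hXω := hX (2*m) ω
      rw [hXω] at hXneg
      have hgt : 1 < ∏ j ∈ I, (1 - 0.01 * C j ω) := by
        rw [hI] at *; linarith
      rw [hprod ω S hSI hvals] at hgt
      have hScard : S.card ≤ 2*m := hIcard ▸ Finset.card_le_card hSI
      have hmS : m < S.card := (cpdo_prod_gt_one m S.card hm1 hm2 hScard).mp hgt
      refine ⟨S, ?_⟩
      simp only [hT, Finset.mem_filter, Finset.mem_powerset]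
      exact ⟨⟨hSI, hmS⟩, (hA_mem S ω).mpr hvals⟩
    · rintro ⟨S, hST⟩
      simp only [hT, Finset.mem_filter, Finset.mem_powerset] at hST
      obtain ⟨⟨hSI, hmS⟩, hωA⟩ := hST
      rw [hA_mem] at hωA
      have hScard : S.card ≤ 2*m := hIcard ▸ Finset.card_le_card hSI
      have hgt : 1 < ∏ j ∈ I, (1 - 0.01 * C j ω) := by
        rw [hprod ω S hSI hωA]
        exact (cpdo_prod_gt_one m S.card hm1 hm2 hScard).mpr hmS
      constructor
      · rw [hX (2*m) ω, ← hI]; linarith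
      · rw [hG_mem]
        intro j hj
        have := hωA j hj
        split_ifs at this
        · exact Or.inr this
        · exact Or.inl this
  -- disjointness
  have hdisj : (T : Set (Finset ℕ)).PairwiseDisjoint A := by
    intro S hS S' hS' hne
    simp only [hT, Finset.coe_filter, Set.mem_setOf_eq, Finset.mem_powerset] at hS hS'
    rw [Function.onFun, Set.disjoint_left]
    intro ω hω hω'
    rw [hA_mem] at hω hω'
    apply hne
    ext j
    constructor
    · intro hjS
      have hjI : j ∈ I := hS.1 hjS
      have h1 := hω j hjI
      have h2 := hω' j hjI
      rw [if_pos hjS] at h1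
      by_contra hjS'
      rw [if_neg hjS'] at h2
      norm_num [h1] at h2
    · intro hjS'
      have hjI : j ∈ I := hS'.1 hjS'
      have h1 := hω j hjI
      have h2 := hω' j hjI
      rw [if_pos hjS'] at h2
      by_contra hjS
      rw [if_neg hjS] at h1
      norm_num [h1] at h2
  -- measure of the event
  have hEG : ℙ {ω | X (2*m) ω < 0} = ℙ ({ω | X (2*m) ω < 0} ∩ G) := by
    refine le_antisymm ?_ (measure_mono Set.inter_subset_left)
    calc ℙ {ω | X (2*m) ω < 0} ≤ ℙ (({ω | X (2*m) ω < 0} ∩ G) ∪ Gᶜ) := by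
          apply measure_mono
          intro ω hω
          by_cases hg : ω ∈ G
          · exact Or.inl ⟨hω, hg⟩
          · exact Or.inr hg
      _ ≤ ℙ ({ω | X (2*m) ω < 0} ∩ G) + ℙ Gᶜ := measure_union_le _ _
      _ = ℙ ({ω | X (2*m) ω < 0} ∩ G) := by rw [hGc, add_zero]
  have hmeasure : ℙ {ω | X (2*m) ω < 0} = (T.card : ℝ≥0∞) * (1/2:ℝ≥0∞)^(2*m) := by
    rw [hEG, hkey, measure_biUnion_finset hdisj (fun S _ => hA_meas S)]
    rw [Finset.sum_congr rfl (fun S _ => hA_prob S), Finset.sum_const, nsmul_eq_mul]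
  -- card of T
  have hTcard : T.card = ∑ k ∈ Finset.Icc (m+1) (2*m), (2*m).choose k := by
    have hTeq : T = (Finset.Icc (m+1) (2*m)).biUnion (fun k => Finset.powersetCard k I) := by
      ext S
      simp only [hT, Finset.mem_filter, Finset.mem_powerset, Finset.mem_biUnion,
        Finset.mem_Icc, Finset.mem_powersetCard]
      constructor
      · rintro ⟨hsub, hcard⟩
        exact ⟨S.card, ⟨by omega, hIcard ▸ Finset.card_le_card hsub⟩, hsub, rfl⟩
      · rintro ⟨k, ⟨hk1, hk2⟩, hsub, hcard⟩
        exact ⟨hsub, by omega⟩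
    rw [hTeq, Finset.card_biUnion]
    · apply Finset.sum_congr rfl
      intro k _
      rw [Finset.card_powersetCard, hIcard]
    · intro k _ k' _ hkk'
      rw [Function.onFun, Finset.disjoint_left]
      intro S hSk hSk'
      rw [Finset.mem_powersetCard] at hSk hSk'
      exact hkk' (hSk.2.symm.trans hSk'.2)
  -- final computation
  have hnat := cpdo_sum_choose m hm1
  rw [← hTcard] at hnat
  rw [hmeasure]
  rw [ENNReal.toReal_mul, ENNReal.toReal_pow]
  have hTc : ((T.card : ℝ≥0∞)).toReal = (T.card : ℝ) := by simp
  rw [hTc]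
  have h12 : ((1:ℝ≥0∞)/2).toReal = (1/2 : ℝ) := by simp
  rw [h12]
  have hcast : 2 * (T.card : ℝ) + ((2*m).choose m : ℝ) = 2^(2*m) := by
    exact_mod_cast congrArg (fun n : ℕ => (n : ℝ)) hnat
  have hpow : (0:ℝ) < 2^(2*m) := by positivity
  rw [div_pow, one_pow]
  rw [pow_succ]
  field_simp
  linear_combination hcast
end

section
/- For every integer m with 0 ≤ m ≤ 99, P(X_{2m+1} < 0) = 1/2. -/
open MeasureTheory ProbabilityTheory

private lemma cpdo_aux_gt (a b : ℕ) (ha : a ≤ 99) (hab : a < b) :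
    (1:ℝ) < 0.99 ^ a * 1.01 ^ b := by
  obtain ⟨d, rfl⟩ := Nat.exists_eq_add_of_lt hab
  have h1 : (0.9999:ℝ) ^ 99 ≤ 0.9999 ^ a :=
    pow_le_pow_of_le_one (by norm_num) (by norm_num) ha
  have h2 : (1.01:ℝ) ^ 1 ≤ 1.01 ^ (d + 1) :=
    pow_le_pow_right₀ (by norm_num) (by omega)
  calc (1:ℝ) < 0.9999 ^ 99 * 1.01 ^ 1 := by norm_num
    _ ≤ 0.9999 ^ a * 1.01 ^ (d + 1) :=
        mul_le_mul h1 h2 (by positivity) (by positivity)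
    _ = 0.99 ^ a * 1.01 ^ (a + d + 1) := by
        have e : (0.99:ℝ) ^ a * 1.01 ^ (a + d + 1)
            = (0.99 * 1.01) ^ a * 1.01 ^ (d + 1) := by
          rw [mul_pow, show a + d + 1 = a + (d + 1) from by omega, pow_add]
          ring
        rw [e]
        norm_num

private lemma cpdo_aux_lt (a b : ℕ) (hab : b < a) :
    (0.99:ℝ) ^ a * 1.01 ^ b < 1 := by
  obtain ⟨d, rfl⟩ := Nat.exists_eq_add_of_lt hab
  have h0 : (0.9999:ℝ) ^ b ≤ 1 := pow_le_one₀ (by norm_num) (by norm_num)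
  have h1 : (0.99:ℝ) ^ (d + 1) < 1 := pow_lt_one₀ (by norm_num) (by norm_num) (by omega)
  calc (0.99:ℝ) ^ (b + d + 1) * 1.01 ^ b
      = 0.9999 ^ b * 0.99 ^ (d + 1) := by
        have : b + d + 1 = b + (d + 1) := by omega
        rw [this, pow_add]
        rw [show (0.9999:ℝ) = 0.99 * 1.01 by norm_num, mul_pow]
        ring
    _ ≤ 1 * 0.99 ^ (d + 1) := by
        apply mul_le_mul_of_nonneg_right h0 (by positivity)
    _ < 1 := by simpa using h1

/-- For the CPDO net capital driven by i.i.d. fair signs with `δ = 0.01`: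
for every `0 ≤ m ≤ 99`, `P(X (2m+1) < 0) = 1/2`. -/
theorem cpdo_odd_loss_probability
    {Ω : Type*} [MeasureSpace Ω] [IsProbabilityMeasure (ℙ : Measure Ω)]
    (δ : ℝ) (hδ : δ = 0.01)
    (C : ℕ → Ω → ℝ)
    (hMeas : ∀ j, Measurable (C j))
    (hIndep : iIndepFun C ℙ)
    (hHead : ∀ j, ℙ {ω | C j ω = 1} = 1/2)
    (hTail : ∀ j, ℙ {ω | C j ω = -1} = 1/2)
    (X : ℕ → Ω → ℝ)
    (hX : ∀ (k : ℕ) (ω : Ω), X k ω = 1 - ∏ j ∈ Finset.Icc 1 k, (1 - δ * C j ω)) :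
    ∀ m : ℕ, m ≤ 99 →
      (ℙ {ω | X (2 * m + 1) ω < 0}).toReal = 1 / 2 := by
  subst hδ
  intro m hm
  set n := 2 * m + 1 with hn
  set S : Finset ℕ := Finset.Icc 1 n with hS
  have hcardS : S.card = n := by simp [hS]
  set E : Set Ω := {ω | X n ω < 0} with hE
  -- measurability of E
  have hXn : X n = fun ω => 1 - ∏ j ∈ S, (1 - 0.01 * C j ω) := funext fun ω => hX n ω
  have hXmeas : Measurable (X n) := by
    rw [hXn]
    exact measurable_const.sub
      (Finset.measurable_prod S fun j _ => measurable_const.sub ((hMeas j).const_mul _))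
  have hEmeas : MeasurableSet E := measurableSet_lt hXmeas measurable_const
  -- atoms
  set A : Finset ℕ → Set Ω :=
    fun T => ⋂ j ∈ S, C j ⁻¹' {if j ∈ T then (1:ℝ) else -1} with hA
  have hAmeas : ∀ T, MeasurableSet (A T) := fun T =>
    MeasurableSet.biInter S.countable_toSet fun j _ => (hMeas j) (measurableSet_singleton _)
  have hAmem : ∀ T (ω : Ω), ω ∈ A T ↔ ∀ j ∈ S, C j ω = (if j ∈ T then (1:ℝ) else -1) := by
    intro T ω; simp [hA]
  have hsingle : ∀ j (c : ℝ), c = 1 ∨ c = -1 → ℙ (C j ⁻¹' {c}) = 1/2 := by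
    intro j c hc
    rcases hc with h | h <;> subst h
    · rw [← hHead j]; rfl
    · rw [← hTail j]; rfl
  have hatom : ∀ T, ℙ (A T) = (1/2 : ENNReal) ^ n := by
    intro T
    rw [hA]
    rw [hIndep.measure_inter_preimage_eq_mul S
      (sets := fun j => ({if j ∈ T then (1:ℝ) else -1} : Set ℝ))
      (fun i _ => measurableSet_singleton _)]
    rw [Finset.prod_congr rfl (fun j _ => hsingle j _ (by split_ifs <;> simp)),
      Finset.prod_const, hcardS]
  -- disjointness
  have hdisj : ∀ T1 T2 : Finset ℕ, T1 ⊆ S → T2 ⊆ S → T1 ≠ T2 → Disjoint (A T1) (A T2) := by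
    intro T1 T2 h1 h2 hne
    rw [Set.disjoint_left]
    intro ω hω1 hω2
    have : ¬ ∀ j, j ∈ T1 ↔ j ∈ T2 := fun h => hne (Finset.ext h)
    push_neg at this
    obtain ⟨j, hj⟩ := this
    have hjS : j ∈ S := by
      by_cases hj1 : j ∈ T1
      · exact h1 hj1
      · exact h2 (by tauto)
    have e1 := (hAmem T1 ω).mp hω1 j hjS
    have e2 := (hAmem T2 ω).mp hω2 j hjS
    by_cases hj1 : j ∈ T1 <;> by_cases hj2 : j ∈ T2 <;>
      simp [hj1, hj2] at e1 e2 hj <;> rw [e1] at e2 <;> norm_num at e2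
  -- product value on atoms
  have hprod : ∀ T, T ⊆ S → ∀ ω ∈ A T,
      ∏ j ∈ S, (1 - 0.01 * C j ω) = (0.99:ℝ) ^ T.card * 1.01 ^ (n - T.card) := by
    intro T hT ω hω
    have hmem := (hAmem T ω).mp hω
    have step : ∏ j ∈ S, (1 - 0.01 * C j ω)
        = ∏ j ∈ S, (if j ∈ T then (0.99:ℝ) else 1.01) := by
      refine Finset.prod_congr rfl fun j hj => ?_
      rw [hmem j hj]
      split_ifs <;> norm_num
    have hfilt : S.filter (fun j => j ∈ T) = T := by
      rw [Finset.filter_mem_eq_inter, Finset.inter_eq_right.mpr hT]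
    rw [step, Finset.prod_ite, Finset.prod_const, Finset.prod_const, hfilt,
      Finset.filter_not, hfilt, Finset.card_sdiff_of_subset hT, hcardS]
  have hcardT : ∀ T, T ⊆ S → T.card ≤ n := fun T hT => hcardS ▸ Finset.card_le_card hT
  -- E ∩ A T
  have hEA : ∀ T, T ⊆ S → E ∩ A T = if 2 * T.card < n then A T else ∅ := by
    intro T hT
    split_ifs with hfav
    · refine Set.inter_eq_right.mpr fun ω hω => ?_
      show X n ω < 0
      rw [hX n ω, hprod T hT ω hω]
      have hle : T.card ≤ 99 := by omega
      have := cpdo_aux_gt T.card (n - T.card) hle (by omega)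
      linarith
    · refine Set.eq_empty_of_forall_notMem fun ω hω => ?_
      obtain ⟨hωE, hωA⟩ := hω
      have hxe : X n ω < 0 := hωE
      rw [hX n ω, hprod T hT ω hωA] at hxe
      have hne : 2 * T.card ≠ n := by omega
      have hTn := hcardT T hT
      have := cpdo_aux_lt T.card (n - T.card) (by omega)
      linarith
  -- the union of atoms has full measure
  set U : Set Ω := ⋃ T ∈ S.powerset, A T with hU
  have hUmeas : MeasurableSet U :=
    MeasurableSet.biUnion S.powerset.countable_toSet fun T _ => hAmeas T
  have hdisjP : (S.powerset : Set (Finset ℕ)).PairwiseDisjoint A := by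
    intro T1 h1 T2 h2 hne
    exact hdisj T1 T2 (Finset.mem_powerset.mp h1) (Finset.mem_powerset.mp h2) hne
  have hUmeasure : ℙ U = 1 := by
    rw [hU, measure_biUnion_finset hdisjP fun T _ => hAmeas T]
    rw [Finset.sum_congr rfl fun T _ => hatom T, Finset.sum_const,
      Finset.card_powerset, hcardS]
    simp only [nsmul_eq_mul, Nat.cast_pow, Nat.cast_ofNat]
    rw [one_div, ← ENNReal.inv_pow, ENNReal.mul_inv_cancel (by positivity) (by simp)]
  have hUc : ℙ (E \ U) = 0 := by
    have h1 : ℙ Uᶜ = 0 := by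
      rw [measure_compl hUmeas (measure_ne_top _ _), hUmeasure, measure_univ, tsub_self]
    exact measure_mono_null (fun ω h => h.2) h1
  have hsplitE : ℙ E = ℙ (E ∩ U) := by
    have := measure_inter_add_diff E hUmeas (μ := ℙ)
    rw [hUc, add_zero] at this
    exact this.symm
  -- compute ℙ (E ∩ U)
  set fav : Finset (Finset ℕ) := S.powerset.filter (fun T => 2 * T.card < n) with hfav
  have hEU : ℙ (E ∩ U) = (fav.card : ENNReal) * (1/2 : ENNReal) ^ n := by
    rw [hU, Set.inter_iUnion₂]
    rw [measure_biUnion_finset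
      (hdisjP.mono_on fun T _ => Set.inter_subset_right)
      (fun T _ => hEmeas.inter (hAmeas T))]
    have : ∀ T ∈ S.powerset,
        ℙ (E ∩ A T) = if 2 * T.card < n then (1/2 : ENNReal) ^ n else 0 := by
      intro T hT
      rw [hEA T (Finset.mem_powerset.mp hT)]
      split_ifs
      · exact hatom T
      · exact measure_empty
    rw [Finset.sum_congr rfl this, ← Finset.sum_filter, Finset.sum_const, ← hfav,
      nsmul_eq_mul]
  -- count favourable subsets
  have hfavcard : fav.card = 2 ^ (2 * m) := by
    have hsplit := Finset.card_filter_add_card_filter_not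
      (s := S.powerset) (p := fun T => 2 * T.card < n)
    rw [Finset.card_powerset, hcardS] at hsplit
    have hbij : (S.powerset.filter fun T => ¬ 2 * T.card < n).card = fav.card := by
      rw [hfav]
      apply Finset.card_bij (fun T _ => S \ T)
      · intro T hT
        simp only [Finset.mem_filter, Finset.mem_powerset] at hT ⊢
        have hTc := hcardT T hT.1
        constructor
        · exact Finset.sdiff_subset
        · rw [Finset.card_sdiff_of_subset hT.1, hcardS]; omega
      · intro T1 h1 T2 h2 heq
        simp only [Finset.mem_filter, Finset.mem_powerset] at h1 h2
        have := congrArg (S \ ·) heq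
        simpa [Finset.sdiff_sdiff_eq_self h1.1, Finset.sdiff_sdiff_eq_self h2.1] using this
      · intro T hT
        simp only [Finset.mem_filter, Finset.mem_powerset] at hT
        refine ⟨S \ T, ?_, ?_⟩
        · simp only [Finset.mem_filter, Finset.mem_powerset]
          have hTc := hcardT T hT.1
          constructor
          · exact Finset.sdiff_subset
          · rw [Finset.card_sdiff_of_subset hT.1, hcardS]; omega
        · exact Finset.sdiff_sdiff_eq_self hT.1
    rw [hbij, ← hfav] at hsplit
    have h2n : (2:ℕ) ^ n = 2 ^ (2 * m) * 2 := pow_succ 2 (2 * m)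
    omega
  -- finish
  show (ℙ E).toReal = 1 / 2
  rw [hsplitE, hEU, hfavcard]
  rw [ENNReal.toReal_mul, ENNReal.toReal_pow, ENNReal.toReal_natCast]
  have hhalf : ((1:ENNReal)/2).toReal = (1:ℝ)/2 := by
    rw [ENNReal.toReal_div]; simp
  rw [hhalf]
  push_cast
  rw [hn, pow_succ, ← mul_assoc, ← mul_pow]
  norm_num
end

section
/- For every integer m with 1 ≤ m ≤ 199, P(X_{2m} < 0 | X_1 < 0) = 1/2, where the conditioning event X_1 < 0 has probability 1/2 > 0. -/
open MeasureTheory ProbabilityTheory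
open scoped ENNReal

lemma cpdo_key_ineq (m b : ℕ) (hm1 : 1 ≤ m) (hm2 : m ≤ 199) (hb : b ≤ 2*m) :
    1 < (1.01:ℝ)^b * 0.99^(2*m - b) ↔ m + 1 ≤ b := by
  constructor
  · intro h
    by_contra hc
    push_neg at hc
    have hbm : b ≤ m := by omega
    have he : 2*m - b = b + 2*(m - b) := by omega
    rw [he, pow_add, pow_mul] at h
    have h1 : ((1.01:ℝ))^b * 0.99^b ≤ 1 := by
      rw [← mul_pow]; exact pow_le_one₀ (by norm_num) (by norm_num)
    have h2 : (((0.99:ℝ))^2)^(m-b) ≤ 1 := pow_le_one₀ (by norm_num) (by norm_num)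
    have h3 : (0:ℝ) ≤ (1.01:ℝ)^b * 0.99^b := by positivity
    have h4 : (0:ℝ) ≤ (((0.99:ℝ))^2)^(m-b) := by positivity
    nlinarith
  · intro h
    set e := b - (m+1) with hedef
    have hb' : b = (m+1) + e := by omega
    have h3 : (0.99:ℝ)^(m-1) ≤ (1.01:ℝ)^e * 0.99^(2*m - b) := by
      calc (0.99:ℝ)^(m-1) = 0.99^e * 0.99^(2*m-b) := by
            rw [← pow_add]; congr 1; omega
        _ ≤ 1.01^e * 0.99^(2*m-b) := by gcongr <;> norm_num
    have key : (1:ℝ) < 1.01^(m+1) * 0.99^(m-1) := by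
      have hm1' : m + 1 = 2 + (m-1) := by omega
      rw [hm1', pow_add]
      have : (1.01:ℝ)^(m-1) * 0.99^(m-1) = 0.9999^(m-1) := by
        rw [← mul_pow]; norm_num
      have p1 : (0.9999:ℝ)^198 ≤ 0.9999^(m-1) :=
        pow_le_pow_of_le_one (by norm_num) (by norm_num) (by omega)
      have p0 : (1:ℝ) < 1.01^2 * 0.9999^198 := by norm_num
      have p2 : (1:ℝ) < 1.01^2 * 0.9999^(m-1) := by nlinarith
      calc (1:ℝ) < 1.01^2 * 0.9999^(m-1) := p2
        _ = 1.01^2 * (1.01^(m-1) * 0.99^(m-1)) := by rw [this]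
        _ = 1.01^2 * 1.01^(m-1) * 0.99^(m-1) := by ring
    calc (1:ℝ) < 1.01^(m+1) * 0.99^(m-1) := key
      _ ≤ 1.01^(m+1) * (1.01^e * 0.99^(2*m-b)) := by gcongr
      _ = 1.01^b * 0.99^(2*m-b) := by rw [hb', pow_add]; ring

lemma cpdo_count (m : ℕ) (hm : 1 ≤ m) :
    (((Finset.Icc 1 (2*m)).powerset.filter (fun s => 1 ∈ s ∧ m+1 ≤ s.card)).card) = 2^(2*m-2) := by
  set T := Finset.Icc 2 (2*m) with hT
  have hTcard : T.card = 2*m - 1 := by rw [hT, Nat.card_Icc]; omega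
  set P1 := T.powerset.filter (fun t => m ≤ t.card) with hP1
  set P2 := T.powerset.filter (fun t => ¬ m ≤ t.card) with hP2
  have step1 : ((Finset.Icc 1 (2*m)).powerset.filter (fun s => 1 ∈ s ∧ m+1 ≤ s.card)).card
      = P1.card := by
    refine Finset.card_bij' (fun s _ => s.erase 1) (fun t _ => insert 1 t) ?_ ?_ ?_ ?_
    · intro s hs
      simp only [hP1, hP2, hT, Finset.mem_filter, Finset.mem_powerset] at hs ⊢
      obtain ⟨hsub, h1, hcard⟩ := hs
      constructor
      · intro j hj
        rw [Finset.mem_erase] at hj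
        have := hsub hj.2
        rw [Finset.mem_Icc] at this ⊢
        omega
      · rw [Finset.card_erase_of_mem h1]; omega
    · intro t ht
      simp only [hP1, hP2, hT, Finset.mem_filter, Finset.mem_powerset] at ht ⊢
      obtain ⟨hsub, hcard⟩ := ht
      have h1t : 1 ∉ t := by
        intro h; have := hsub h; rw [Finset.mem_Icc] at this; omega
      refine ⟨?_, Finset.mem_insert_self _ _, ?_⟩
      · intro j hj
        rcases Finset.mem_insert.1 hj with rfl | hj
        · rw [Finset.mem_Icc]; omega
        · have := hsub hj; rw [Finset.mem_Icc] at this ⊢; omega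
      · rw [Finset.card_insert_of_notMem h1t]; omega
    · intro s hs
      simp only [hP1, hP2, hT, Finset.mem_filter, Finset.mem_powerset] at hs
      exact Finset.insert_erase hs.2.1
    · intro t ht
      simp only [hP1, hP2, hT, Finset.mem_filter, Finset.mem_powerset] at ht
      have h1t : 1 ∉ t := by
        intro h; have := ht.1 h; rw [Finset.mem_Icc] at this; omega
      exact Finset.erase_insert h1t
  have step2 : P1.card = P2.card := by
    refine Finset.card_bij' (fun t _ => T \ t) (fun t _ => T \ t) ?_ ?_ ?_ ?_
    · intro t ht
      simp only [hP1, hP2, hT, Finset.mem_filter, Finset.mem_powerset] at ht ⊢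
      refine ⟨Finset.sdiff_subset, ?_⟩
      rw [Finset.card_sdiff_of_subset ht.1]
      have := Finset.card_le_card ht.1
      rw [hT] at *
      rw [Nat.card_Icc] at *
      omega
    · intro t ht
      simp only [hP1, hP2, hT, Finset.mem_filter, Finset.mem_powerset] at ht ⊢
      refine ⟨Finset.sdiff_subset, ?_⟩
      rw [Finset.card_sdiff_of_subset ht.1]
      have := Finset.card_le_card ht.1
      rw [hT] at *
      rw [Nat.card_Icc] at *
      omega
    · intro t ht
      simp only [hP1, hT, Finset.mem_filter, Finset.mem_powerset] at ht
      exact Finset.sdiff_sdiff_eq_self ht.1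
    · intro t ht
      simp only [hP2, hT, Finset.mem_filter, Finset.mem_powerset] at ht
      exact Finset.sdiff_sdiff_eq_self ht.1
  have hsplit : P1.card + P2.card = 2^(2*m-1) := by
    rw [hP1, hP2, Finset.card_filter_add_card_filter_not,
      Finset.card_powerset, hTcard]
  have hpow : (2:ℕ)^(2*m-1) = 2 * 2^(2*m-2) := by
    rw [← pow_succ']
    congr 1
    omega
  omega

/-- For the CPDO net capital driven by i.i.d. fair signs with `δ = 0.01`:
the conditioning event `{X 1 < 0}` has probability `1/2 > 0`, and for every `1 ≤ m ≤ 199`,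
`P(X (2m) < 0 | X 1 < 0) = 1/2`. -/
theorem cpdo_even_loss_given_first_loss
    {Ω : Type*} [MeasureSpace Ω] [IsProbabilityMeasure (ℙ : Measure Ω)]
    (δ : ℝ) (hδ : δ = 0.01)
    (C : ℕ → Ω → ℝ)
    (hMeas : ∀ j, Measurable (C j))
    (hIndep : iIndepFun C ℙ)
    (hHead : ∀ j, ℙ {ω | C j ω = 1} = 1/2)
    (hTail : ∀ j, ℙ {ω | C j ω = -1} = 1/2)
    (X : ℕ → Ω → ℝ)
    (hX : ∀ (k : ℕ) (ω : Ω), X k ω = 1 - ∏ j ∈ Finset.Icc 1 k, (1 - δ * C j ω)) :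
    ℙ {ω | X 1 ω < 0} = 1/2 ∧
    ∀ m : ℕ, 1 ≤ m → m ≤ 199 →
      (ℙ[|{ω | X 1 ω < 0}] {ω | X (2 * m) ω < 0}).toReal = 1 / 2 := by
  classical
  subst hδ
  -- the full-measure set where all C j take values ±1
  set N : Set Ω := {ω | ∀ j, C j ω = 1 ∨ C j ω = -1} with hNdef
  have hBadNull : ∀ j, ℙ ({ω | C j ω = 1} ∪ {ω | C j ω = -1})ᶜ = 0 := by
    intro j
    have hm1 : MeasurableSet {ω | C j ω = 1} := hMeas j (measurableSet_singleton 1)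
    have hm2 : MeasurableSet {ω | C j ω = -1} := hMeas j (measurableSet_singleton (-1))
    have hdisj : Disjoint {ω | C j ω = 1} {ω | C j ω = -1} := by
      rw [Set.disjoint_left]
      intro ω h1 h2
      simp only [Set.mem_setOf_eq] at h1 h2
      rw [h1] at h2; norm_num at h2
    have hu : ℙ ({ω | C j ω = 1} ∪ {ω | C j ω = -1}) = 1 := by
      rw [measure_union hdisj hm2, hHead j, hTail j]
      have h22 : (2:ℝ≥0∞) ≠ 0 := by norm_num
      have h2t : (2:ℝ≥0∞) ≠ ⊤ := by norm_num
      rw [ENNReal.div_add_div_same, (by norm_num : (1:ℝ≥0∞)+1 = 2), ENNReal.div_self h22 h2t]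
    rw [prob_compl_eq_one_sub (hm1.union hm2), hu, tsub_self]
  have hNnull : ℙ Nᶜ = 0 := by
    have hsub : Nᶜ ⊆ ⋃ j, ({ω | C j ω = 1} ∪ {ω | C j ω = -1})ᶜ := by
      intro ω hω
      simp only [hNdef, Set.mem_compl_iff, Set.mem_setOf_eq, not_forall] at hω
      obtain ⟨j, hj⟩ := hω
      refine Set.mem_iUnion.2 ⟨j, ?_⟩
      simp only [Set.mem_compl_iff, Set.mem_union, Set.mem_setOf_eq]
      tauto
    exact measure_mono_null hsub (measure_iUnion_null hBadNull)
  have hinterN : ∀ S : Set Ω, ℙ (S ∩ N) = ℙ S := by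
    intro S
    refine le_antisymm (measure_mono Set.inter_subset_left) ?_
    calc ℙ S ≤ ℙ (S ∩ N) + ℙ (S \ N) := measure_le_inter_add_diff _ _ _
      _ ≤ ℙ (S ∩ N) + ℙ Nᶜ := by
          gcongr
          exact fun ω hω => hω.2
      _ = ℙ (S ∩ N) := by rw [hNnull, add_zero]
  -- cylinders
  set E : ℕ → Finset ℕ → Set Ω :=
    fun n s => ⋂ j ∈ Finset.Icc 1 n, C j ⁻¹' {if j ∈ s then (-1:ℝ) else 1} with hEdef
  have hEmeas : ∀ n s, MeasurableSet (E n s) := by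
    intro n s
    exact Finset.measurableSet_biInter _ fun j _ => hMeas j (measurableSet_singleton _)
  have hEmem : ∀ n s ω, ω ∈ E n s ↔
      ∀ j ∈ Finset.Icc 1 n, C j ω = if j ∈ s then (-1:ℝ) else 1 := by
    intro n s ω
    simp [hEdef]
  have hcyl : ∀ n s, ℙ (E n s) = (1/2)^n := by
    intro n s
    rw [hEdef]
    rw [hIndep.measure_inter_preimage_eq_mul (Finset.Icc 1 n)
      (sets := fun j => {if j ∈ s then (-1:ℝ) else 1})
      (fun j _ => measurableSet_singleton _)]
    have : ∀ j ∈ Finset.Icc 1 n, ℙ (C j ⁻¹' {if j ∈ s then (-1:ℝ) else 1}) = 1/2 := by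
      intro j _
      by_cases hj : j ∈ s <;> simp only [hj, if_true, if_false]
      · exact hTail j
      · exact hHead j
    rw [Finset.prod_congr rfl this, Finset.prod_const, Nat.card_Icc]
    norm_num
  -- the product value on a cylinder
  have hval : ∀ n s, s ⊆ Finset.Icc 1 n → ∀ ω ∈ E n s,
      ∏ j ∈ Finset.Icc 1 n, (1 - 0.01 * C j ω) = (1.01:ℝ)^s.card * 0.99^(n - s.card) := by
    intro n s hsub ω hω
    rw [hEmem] at hω
    have hcongr : ∏ j ∈ Finset.Icc 1 n, (1 - 0.01 * C j ω)
        = ∏ j ∈ Finset.Icc 1 n, (if j ∈ s then (1.01:ℝ) else 0.99) := by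
      refine Finset.prod_congr rfl fun j hj => ?_
      rw [hω j hj]
      by_cases h : j ∈ s <;> simp [h] <;> norm_num
    rw [hcongr, Finset.prod_ite, Finset.prod_const, Finset.prod_const]
    have hfil : (Finset.Icc 1 n).filter (fun j => j ∈ s) = s := by
      ext j
      simp only [Finset.mem_filter]
      exact ⟨fun h => h.2, fun h => ⟨hsub h, h⟩⟩
    have hcards : ((Finset.Icc 1 n).filter (fun j => ¬ j ∈ s)).card = n - s.card := by
      have := Finset.card_filter_add_card_filter_not
        (s := Finset.Icc 1 n) (p := fun j => j ∈ s)
      rw [hfil] at this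
      rw [Nat.card_Icc] at this
      omega
    rw [hfil, hcards]
  -- disjointness of cylinders
  have hdisjE : ∀ n, ∀ s ∈ (Finset.Icc 1 n).powerset, ∀ t ∈ (Finset.Icc 1 n).powerset,
      s ≠ t → Disjoint (E n s) (E n t) := by
    intro n s hs t ht hst
    rw [Finset.mem_powerset] at hs ht
    have : ∃ j, ¬ (j ∈ s ↔ j ∈ t) := by
      by_contra h
      push_neg at h
      exact hst (Finset.ext fun j => h j)
    obtain ⟨j, hj⟩ := this
    have hjI : j ∈ Finset.Icc 1 n := by
      rcases Classical.em (j ∈ s) with h | h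
      · exact hs h
      · have : j ∈ t := by tauto
        exact ht this
    rw [Set.disjoint_left]
    intro ω h1 h2
    rw [hEmem] at h1 h2
    have e1 := h1 j hjI
    have e2 := h2 j hjI
    rcases Classical.em (j ∈ s) with h | h <;> rcases Classical.em (j ∈ t) with h' | h'
    · tauto
    · simp only [h, h', if_true, if_false] at e1 e2; rw [e1] at e2; norm_num at e2
    · simp only [h, h', if_true, if_false] at e1 e2; rw [e1] at e2; norm_num at e2
    · tauto
  -- pattern of a point in N
  have hpattern : ∀ n, ∀ ω ∈ N, ω ∈ E n ((Finset.Icc 1 n).filter (fun j => C j ω = -1)) := by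
    intro n ω hω
    rw [hEmem]
    intro j hj
    by_cases h : j ∈ (Finset.Icc 1 n).filter (fun j => C j ω = -1)
    · rw [if_pos h]
      exact (Finset.mem_filter.1 h).2
    · rw [if_neg h]
      rcases hω j with h1 | h1
      · exact h1
      · exact absurd (Finset.mem_filter.2 ⟨hj, h1⟩) h
  -- X 1 on N
  have hX1 : ∀ ω ∈ N, (X 1 ω < 0 ↔ C 1 ω = -1) := by
    intro ω hω
    rw [hX 1 ω]
    have : Finset.Icc 1 1 = {1} := rfl
    rw [this, Finset.prod_singleton]
    rcases hω 1 with h | h <;> rw [h] <;> norm_num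
  set B : Set Ω := {ω | X 1 ω < 0} with hBdef
  have hBmeas : MeasurableSet B := by
    have hXm : Measurable (X 1) := by
      have : X 1 = fun ω => 1 - ∏ j ∈ Finset.Icc 1 1, (1 - 0.01 * C j ω) := funext (hX 1)
      rw [this]
      exact measurable_const.sub
        (Finset.measurable_prod _ fun j _ => measurable_const.sub ((hMeas j).const_mul _))
    exact measurableSet_lt hXm measurable_const
  have hBN : B ∩ N = {ω | C 1 ω = -1} ∩ N := by
    ext ω
    simp only [Set.mem_inter_iff, hBdef, Set.mem_setOf_eq]
    exact ⟨fun ⟨h1, h2⟩ => ⟨(hX1 ω h2).1 h1, h2⟩, fun ⟨h1, h2⟩ => ⟨(hX1 ω h2).2 h1, h2⟩⟩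
  have hPB : ℙ B = 1/2 := by
    rw [← hinterN B, hBN, hinterN, hTail 1]
  refine ⟨hPB, ?_⟩
  intro m hm1 hm2
  set n := 2 * m with hndef
  set A : Set Ω := {ω | X n ω < 0} with hAdef
  set Good : Finset (Finset ℕ) :=
    (Finset.Icc 1 n).powerset.filter (fun s => 1 ∈ s ∧ m+1 ≤ s.card) with hGdef
  -- B ∩ A agrees with the union of good cylinders on N
  have hmain : (B ∩ A) ∩ N = (⋃ s ∈ Good, E n s) ∩ N := by
    ext ω
    simp only [Set.mem_inter_iff, Set.mem_iUnion, exists_prop]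
    constructor
    · rintro ⟨⟨hB, hA⟩, hN⟩
      refine ⟨⟨(Finset.Icc 1 n).filter (fun j => C j ω = -1), ?_, hpattern n ω hN⟩, hN⟩
      set s := (Finset.Icc 1 n).filter (fun j => C j ω = -1) with hsdef
      have hsub : s ⊆ Finset.Icc 1 n := Finset.filter_subset _ _
      have hb : s.card ≤ n := by
        have := Finset.card_le_card hsub
        rw [Nat.card_Icc] at this; omega
      have hprod := hval n s hsub ω (hpattern n ω hN)
      have hA' : (1:ℝ) < ∏ j ∈ Finset.Icc 1 n, (1 - 0.01 * C j ω) := by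
        have := hA
        rw [hAdef, Set.mem_setOf_eq, hX n ω] at this
        linarith
      rw [hprod] at hA'
      have hcard : m + 1 ≤ s.card := by
        rw [← cpdo_key_ineq m s.card hm1 hm2 (by omega)]
        rw [hndef] at hA'
        exact hA'
      have h1s : 1 ∈ s := by
        rw [hsdef, Finset.mem_filter]
        exact ⟨by rw [Finset.mem_Icc]; omega, (hX1 ω hN).1 hB⟩
      rw [hGdef, Finset.mem_filter, Finset.mem_powerset]
      exact ⟨hsub, h1s, hcard⟩
    · rintro ⟨⟨s, hsG, hsE⟩, hN⟩
      rw [hGdef, Finset.mem_filter, Finset.mem_powerset] at hsG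
      obtain ⟨hsub, h1s, hcard⟩ := hsG
      have hb : s.card ≤ n := by
        have := Finset.card_le_card hsub
        rw [Nat.card_Icc] at this; omega
      have hprod := hval n s hsub ω hsE
      have hgt : (1:ℝ) < (1.01:ℝ)^s.card * 0.99^(n - s.card) := by
        rw [hndef]
        exact (cpdo_key_ineq m s.card hm1 hm2 (by omega)).2 hcard
      have hC1 : C 1 ω = -1 := by
        have := (hEmem n s ω).1 hsE 1 (by rw [Finset.mem_Icc]; omega)
        rwa [if_pos h1s] at this
      refine ⟨⟨(hX1 ω hN).2 hC1, ?_⟩, hN⟩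
      rw [hAdef, Set.mem_setOf_eq, hX n ω, hprod]
      linarith
  have hGcard : Good.card = 2^(2*m-2) := cpdo_count m hm1
  have hpd : (↑Good : Set (Finset ℕ)).PairwiseDisjoint (E n) := by
    intro s hs t ht hst
    have hs' : s ∈ (Finset.Icc 1 n).powerset := by
      have := Finset.mem_coe.1 hs
      rw [hGdef, Finset.mem_filter] at this
      exact this.1
    have ht' : t ∈ (Finset.Icc 1 n).powerset := by
      have := Finset.mem_coe.1 ht
      rw [hGdef, Finset.mem_filter] at this
      exact this.1
    exact hdisjE n s hs' t ht' hst
  have hPU : ℙ (⋃ s ∈ Good, E n s) = (2:ℝ≥0∞)^(2*m-2) * (1/2)^n := by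
    rw [measure_biUnion_finset hpd (fun s _ => hEmeas n s)]
    rw [Finset.sum_congr rfl (fun s _ => hcyl n s), Finset.sum_const, hGcard,
      nsmul_eq_mul]
    push_cast
    ring
  have hPBA : ℙ (B ∩ A) = 1/4 := by
    rw [← hinterN (B ∩ A), hmain, hinterN, hPU]
    have h2m : n = (2*m-2) + 2 := by omega
    rw [h2m, pow_add, ← mul_assoc, ← mul_pow]
    have : (2:ℝ≥0∞) * (1/2) = 1 := by
      rw [one_div, ENNReal.mul_inv_cancel] <;> norm_num
    rw [this, one_pow, one_mul]
    rw [one_div, one_div, ← ENNReal.inv_pow]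
    norm_num
  rw [cond_apply hBmeas ℙ A, hPB, hPBA, ENNReal.toReal_mul, ENNReal.toReal_inv]
  rw [ENNReal.toReal_div, ENNReal.toReal_div]
  norm_num
end

section
/- For every integer m with 1 ≤ m ≤ 99, P(X_{2m+1} < 0 | X_1 < 0) = 1/2 + (1/2^{2m+1}) · C(2m, m), where C(2m, m) is the binomial coefficient and the conditioning event X_1 < 0 has probability 1/2 > 0. -/
open MeasureTheory ProbabilityTheory ENNReal

lemma gt_aux (a b : ℕ) (ha : a ≤ 99) (hab : a < b) : (1:ℝ) < 1.01^b * 0.99^a := by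
  obtain ⟨d, rfl⟩ := Nat.exists_eq_add_of_lt hab
  have h1 : (1.01:ℝ)^(a+d+1) * 0.99^a = (1.01*0.99)^a * 1.01^(d+1) := by
    rw [pow_add, pow_add, mul_pow]; ring
  rw [h1]
  have h2 : ((1.01:ℝ)*0.99)^99 ≤ (1.01*0.99)^a :=
    pow_le_pow_of_le_one (by norm_num) (by norm_num) ha
  have h3 : (1.01:ℝ)^1 ≤ 1.01^(d+1) := pow_le_pow_right₀ (by norm_num) (by omega)
  calc (1:ℝ) < (1.01*0.99)^99 * 1.01^1 := by norm_num
    _ ≤ (1.01*0.99)^a * 1.01^(d+1) :=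
        mul_le_mul h2 h3 (by positivity) (by positivity)

lemma lt_aux (a b : ℕ) (hab : b < a) : (1.01:ℝ)^b * 0.99^a < 1 := by
  obtain ⟨d, rfl⟩ := Nat.exists_eq_add_of_lt hab
  have h1 : (1.01:ℝ)^b * 0.99^(b+d+1) = (1.01*0.99)^b * 0.99^(d+1) := by
    rw [pow_add, pow_add, mul_pow]; ring
  rw [h1]
  have h2 : ((1.01:ℝ)*0.99)^b ≤ 1 := pow_le_one₀ (by norm_num) (by norm_num)
  have h3 : (0.99:ℝ)^(d+1) ≤ 0.99^1 := pow_le_pow_of_le_one (by norm_num) (by norm_num) (by omega)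
  nlinarith [pow_pos (show (0:ℝ) < 0.99 by norm_num) (d+1)]

lemma prod_gt_one_iff (m b : ℕ) (hm9 : m ≤ 99) (hb : b ≤ 2*m+1) :
    (1:ℝ) < (1.01:ℝ)^b * (0.99:ℝ)^(2*m+1-b) ↔ m+1 ≤ b := by
  constructor
  · intro h
    by_contra hc
    exact absurd h (not_lt.2 (le_of_lt (lt_aux (2*m+1-b) b (by omega))))
  · intro h
    exact gt_aux (2*m+1-b) b (by omega) (by omega)

lemma count_half (n : ℕ) (s : Finset ℕ) (hs : s.card = 2*n) :
    2 * (s.powerset.filter (fun G => n ≤ G.card)).card = 2^(2*n) + (2*n).choose n := by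
  set A := s.powerset.filter (fun G => n ≤ G.card) with hA
  set B := s.powerset.filter (fun G => G.card ≤ n) with hB
  have hcardAB : A.card = B.card := by
    apply Finset.card_bij (fun G _ => s \ G)
    · intro G hG
      simp only [hA, hB, Finset.mem_filter, Finset.mem_powerset] at hG ⊢
      refine ⟨Finset.sdiff_subset, ?_⟩
      rw [Finset.card_sdiff_of_subset hG.1]
      omega
    · intro G hG G' hG' he
      simp only [hA, Finset.mem_filter, Finset.mem_powerset] at hG hG'
      have := congrArg (fun t => s \ t) he
      simpa only [sdiff_sdiff_eq_self hG.1, sdiff_sdiff_eq_self hG'.1] using this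
    · intro G hG
      simp only [hB, Finset.mem_filter, Finset.mem_powerset] at hG
      refine ⟨s \ G, ?_, ?_⟩
      · simp only [hA, Finset.mem_filter, Finset.mem_powerset]
        refine ⟨Finset.sdiff_subset, ?_⟩
        rw [Finset.card_sdiff_of_subset hG.1]; omega
      · exact sdiff_sdiff_eq_self hG.1
  have hunion : A ∪ B = s.powerset := by
    ext G
    simp only [hA, hB, Finset.mem_union, Finset.mem_filter]
    constructor
    · rintro (h | h) <;> exact h.1
    · intro h; by_cases hc : n ≤ G.card
      · exact Or.inl ⟨h, hc⟩
      · exact Or.inr ⟨h, by omega⟩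
  have hinter : A ∩ B = Finset.powersetCard n s := by
    ext G
    simp only [hA, hB, Finset.mem_inter, Finset.mem_filter, Finset.mem_powerset,
      Finset.mem_powersetCard]
    constructor
    · rintro ⟨⟨h1, h2⟩, ⟨_, h4⟩⟩; exact ⟨h1, by omega⟩
    · rintro ⟨h1, h2⟩; exact ⟨⟨h1, by omega⟩, ⟨h1, by omega⟩⟩
  have := Finset.card_union_add_card_inter A B
  rw [hunion, hinter, Finset.card_powerset, hs, Finset.card_powersetCard, hs, hcardAB] at this
  omega

lemma count_main (m : ℕ) (hm : 1 ≤ m) :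
    2 * (((Finset.Icc 1 (2*m+1)).powerset.filter (fun F => 1 ∈ F ∧ m+1 ≤ F.card)).card)
      = 2^(2*m) + (2*m).choose m := by
  rw [← count_half m (Finset.Icc 2 (2*m+1)) (by rw [Nat.card_Icc]; omega)]
  congr 1
  apply Finset.card_bij (fun F _ => F.erase 1)
  · intro F hF
    simp only [Finset.mem_filter, Finset.mem_powerset] at hF ⊢
    obtain ⟨hsub, h1, hcard⟩ := hF
    constructor
    · intro x hx
      have hx1 : x ≠ 1 := (Finset.mem_erase.1 hx).1
      have := hsub (Finset.mem_of_mem_erase hx)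
      simp only [Finset.mem_Icc] at this ⊢
      omega
    · rw [Finset.card_erase_of_mem h1]; omega
  · intro F hF F' hF' he
    simp only [Finset.mem_filter] at hF hF'
    have : insert 1 (F.erase 1) = insert 1 (F'.erase 1) := by rw [he]
    rwa [Finset.insert_erase hF.2.1, Finset.insert_erase hF'.2.1] at this
  · intro G hG
    simp only [Finset.mem_filter, Finset.mem_powerset] at hG
    have h1G : 1 ∉ G := by
      intro h; have := hG.1 h; simp only [Finset.mem_Icc] at this; omega
    refine ⟨insert 1 G, ?_, ?_⟩
    · simp only [Finset.mem_filter, Finset.mem_powerset]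
      refine ⟨?_, Finset.mem_insert_self _ _, ?_⟩
      · intro x hx
        rcases Finset.mem_insert.1 hx with rfl | hx'
        · simp only [Finset.mem_Icc]; omega
        · have := hG.1 hx'; simp only [Finset.mem_Icc] at this ⊢; omega
      · rw [Finset.card_insert_of_notMem h1G]; omega
    · rw [Finset.erase_insert h1G]

/-- For the CPDO net capital driven by i.i.d. fair signs with `δ = 0.01`:
the conditioning event `{X 1 < 0}` has probability `1/2 > 0`, and for every `1 ≤ m ≤ 99`,
`P(X (2m+1) < 0 | X 1 < 0) = 1/2 + (1/2^(2m+1)) · C(2m, m)`. -/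
theorem cpdo_odd_loss_given_first_loss
    {Ω : Type*} [MeasureSpace Ω] [IsProbabilityMeasure (ℙ : Measure Ω)]
    (δ : ℝ) (hδ : δ = 0.01)
    (C : ℕ → Ω → ℝ)
    (hMeas : ∀ j, Measurable (C j))
    (hIndep : iIndepFun C ℙ)
    (hHead : ∀ j, ℙ {ω | C j ω = 1} = 1/2)
    (hTail : ∀ j, ℙ {ω | C j ω = -1} = 1/2)
    (X : ℕ → Ω → ℝ)
    (hX : ∀ (k : ℕ) (ω : Ω), X k ω = 1 - ∏ j ∈ Finset.Icc 1 k, (1 - δ * C j ω)) :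
    ℙ {ω | X 1 ω < 0} = 1/2 ∧
    ∀ m : ℕ, 1 ≤ m → m ≤ 99 →
      (ℙ[|{ω | X 1 ω < 0}] {ω | X (2 * m + 1) ω < 0}).toReal
        = 1 / 2 + (1 / 2 ^ (2 * m + 1)) * (Nat.choose (2 * m) m : ℝ) := by
  subst hδ
  have hX1 : ∀ ω, X 1 ω = 0.01 * C 1 ω := by
    intro ω; rw [hX 1 ω, Finset.Icc_self, Finset.prod_singleton]; ring
  have hmC : ∀ (j : ℕ) (v : ℝ), MeasurableSet {ω | C j ω = v} :=
    fun j v => hMeas j (measurableSet_singleton v)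
  have hA1meas : MeasurableSet {ω | X 1 ω < 0} := by
    have hXm : Measurable (X 1) := by
      have : X 1 = fun ω => 0.01 * C 1 ω := funext hX1
      rw [this]; exact (hMeas 1).const_mul _
    exact measurableSet_lt hXm measurable_const
  have hP1 : ℙ {ω | X 1 ω < 0} = 1/2 := by
    apply le_antisymm
    · have hsub : {ω | X 1 ω < 0} ⊆ {ω | C 1 ω = 1}ᶜ := by
        intro ω hω hc
        simp only [Set.mem_setOf_eq] at hω hc
        rw [hX1 ω, hc] at hω; norm_num at hω
      calc ℙ {ω | X 1 ω < 0} ≤ ℙ {ω | C 1 ω = 1}ᶜ := measure_mono hsub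
        _ = 1 - 1/2 := by rw [prob_compl_eq_one_sub (hmC 1 1), hHead 1]
        _ = 1/2 := by norm_num
    · have hsub : {ω | C 1 ω = -1} ⊆ {ω | X 1 ω < 0} := by
        intro ω hc
        simp only [Set.mem_setOf_eq] at hc ⊢
        rw [hX1 ω, hc]; norm_num
      calc (1/2 : ℝ≥0∞) = ℙ {ω | C 1 ω = -1} := (hTail 1).symm
        _ ≤ _ := measure_mono hsub
  refine ⟨hP1, ?_⟩
  intro m hm1 hm99
  set k := 2*m+1 with hk
  set s := Finset.Icc 1 k with hs
  have hscard : s.card = k := by rw [hs, Nat.card_Icc]; omega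
  set A : Finset ℕ → Set Ω := fun F => ⋂ j ∈ s, C j ⁻¹' {if j ∈ F then (-1:ℝ) else 1} with hA
  have hmemA : ∀ (F : Finset ℕ) (ω : Ω),
      ω ∈ A F ↔ ∀ j ∈ s, C j ω = (if j ∈ F then (-1:ℝ) else 1) := by
    intro F ω
    simp only [hA, Set.mem_iInter, Set.mem_preimage, Set.mem_singleton_iff]
  have hAmeas : ∀ F, MeasurableSet (A F) := fun F =>
    MeasurableSet.biInter s.countable_toSet (fun j _ => hMeas j (measurableSet_singleton _))
  have hAprob : ∀ F, ℙ (A F) = (1/2)^k := by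
    intro F
    rw [hA]
    rw [hIndep.measure_inter_preimage_eq_mul s (fun j _ => measurableSet_singleton _)]
    have hterm : ∀ j ∈ s, ℙ (C j ⁻¹' {if j ∈ F then (-1:ℝ) else 1}) = 1/2 := by
      intro j _
      by_cases hj : j ∈ F
      · simp only [hj, if_true]; exact hTail j
      · simp only [hj, if_false]; exact hHead j
    rw [Finset.prod_congr rfl hterm, Finset.prod_const, hscard]
  have hdisj : ∀ F ∈ s.powerset, ∀ F' ∈ s.powerset, F ≠ F' → Disjoint (A F) (A F') := by
    intro F hF F' hF' hne
    rw [Finset.mem_powerset] at hF hF'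
    rw [Set.disjoint_left]
    intro ω hω hω'
    rw [hmemA] at hω hω'
    obtain ⟨j, hj⟩ : ∃ j, ¬(j ∈ F ↔ j ∈ F') := by
      by_contra hcon
      push_neg at hcon
      exact hne (Finset.ext fun j => hcon j)
    have hjs : j ∈ s := by
      by_cases hjF : j ∈ F
      · exact hF hjF
      · have : j ∈ F' := by tauto
        exact hF' this
    have h1 := hω j hjs
    have h2 := hω' j hjs
    by_cases hjF : j ∈ F <;> by_cases hjF' : j ∈ F'
    · exact hj ⟨fun _ => hjF', fun _ => hjF⟩
    · rw [if_pos hjF] at h1; rw [if_neg hjF'] at h2; rw [h1] at h2; norm_num at h2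
    · rw [if_neg hjF] at h1; rw [if_pos hjF'] at h2; rw [h1] at h2; norm_num at h2
    · exact hj (iff_of_false hjF hjF')
  set U : Set Ω := ⋃ F ∈ s.powerset, A F with hU
  have hUmeas : MeasurableSet U :=
    Finset.measurableSet_biUnion _ (fun F _ => hAmeas F)
  have hUprob : ℙ U = 1 := by
    rw [hU, measure_biUnion_finset
      (fun F hF F' hF' hne => hdisj F (Finset.mem_coe.1 hF) F' (Finset.mem_coe.1 hF') hne)
      (fun F _ => hAmeas F)]
    rw [Finset.sum_congr rfl (fun F _ => hAprob F), Finset.sum_const, Finset.card_powerset,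
      hscard, nsmul_eq_mul]
    push_cast
    rw [one_div, ← mul_pow, ENNReal.mul_inv_cancel (by norm_num) (by norm_num), one_pow]
  have hUc : ℙ Uᶜ = 0 := by
    rw [measure_compl hUmeas (measure_ne_top _ _), hUprob, measure_univ, tsub_self]
  have hatom : ∀ F, F ⊆ s → ∀ ω ∈ A F,
      ((X 1 ω < 0) ↔ 1 ∈ F) ∧ ((X k ω < 0) ↔ m+1 ≤ F.card) := by
    intro F hFs ω hω
    rw [hmemA] at hω
    have h1s : (1:ℕ) ∈ s := by
      rw [hs]; simp only [Finset.mem_Icc]; omega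
    constructor
    · rw [hX1 ω, hω 1 h1s]
      by_cases h1F : 1 ∈ F
      · rw [if_pos h1F]
        constructor
        · intro _; exact h1F
        · intro _; norm_num
      · rw [if_neg h1F]
        constructor
        · intro habs; norm_num at habs
        · intro h; exact absurd h h1F
    · rw [hX k ω]
      have hprod : ∏ j ∈ Finset.Icc 1 k, (1 - 0.01 * C j ω)
          = (1.01:ℝ)^F.card * (0.99:ℝ)^(k - F.card) := by
        rw [← hs]
        have hterm : ∀ j ∈ s, (1 - 0.01 * C j ω) = (if j ∈ F then (1.01:ℝ) else 0.99) := by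
          intro j hj
          rw [hω j hj]
          split_ifs <;> norm_num
        rw [Finset.prod_congr rfl hterm, Finset.prod_ite, Finset.prod_const, Finset.prod_const]
        have hpos : (s.filter (· ∈ F)).card = F.card := by
          rw [Finset.filter_mem_eq_inter, Finset.inter_eq_right.2 hFs]
        have hneg : (s.filter (fun j => ¬ j ∈ F)).card = k - F.card := by
          have := Finset.card_filter_add_card_filter_not (s := s) (p := (· ∈ F))
          rw [hscard] at this
          omega
        rw [hpos, hneg]
      rw [hprod]
      have hFcard : F.card ≤ k := hscard ▸ Finset.card_le_card hFs
      constructor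
      · intro h
        have h' : (1:ℝ) < 1.01^F.card * 0.99^(2*m+1 - F.card) := by
          rw [← hk]; linarith
        exact (prod_gt_one_iff m F.card hm99 (by omega)).1 h'
      · intro h
        have h' := (prod_gt_one_iff m F.card hm99 (by omega)).2 h
        rw [← hk] at h'
        linarith
  set good := s.powerset.filter (fun F => 1 ∈ F ∧ m+1 ≤ F.card) with hgood
  set E := {ω | X 1 ω < 0} ∩ {ω | X k ω < 0} with hE
  have hEU : E ∩ U = ⋃ F ∈ good, A F := by
    ext ω
    simp only [hE, hU, hgood, Set.mem_inter_iff, Set.mem_iUnion, Set.mem_setOf_eq,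
      Finset.mem_filter, Finset.mem_powerset, exists_prop]
    constructor
    · rintro ⟨⟨hx1, hxk⟩, F, hF, hωF⟩
      have h := hatom F hF ω hωF
      exact ⟨F, ⟨hF, h.1.1 hx1, h.2.1 hxk⟩, hωF⟩
    · rintro ⟨F, ⟨hF, h1F, hcF⟩, hωF⟩
      have h := hatom F hF ω hωF
      exact ⟨⟨h.1.2 h1F, h.2.2 hcF⟩, F, hF, hωF⟩
  have hEprob : ℙ E = good.card * (1/2)^k := by
    have h1 : ℙ E = ℙ (E ∩ U) := (measure_inter_conull hUc).symm
    rw [h1, hEU, measure_biUnion_finset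
      (fun F hF F' hF' hne => hdisj F (Finset.mem_of_mem_filter F (Finset.mem_coe.1 hF))
        F' (Finset.mem_of_mem_filter F' (Finset.mem_coe.1 hF')) hne)
      (fun F _ => hAmeas F)]
    rw [Finset.sum_congr rfl (fun F _ => hAprob F), Finset.sum_const, nsmul_eq_mul]
  have hcond := cond_apply hA1meas ℙ {ω | X k ω < 0}
  rw [hcond, hP1, ← hE, hEprob]
  have h2N := count_main m hm1
  rw [← hk, ← hs, ← hgood] at h2N
  set N := good.card with hN
  have hNr : (2:ℝ) * N = 2^(2*m) + ((2*m).choose m : ℝ) := by exact_mod_cast h2N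
  rw [ENNReal.toReal_mul, ENNReal.toReal_inv, ENNReal.toReal_mul, ENNReal.toReal_pow,
    ENNReal.toReal_natCast]
  have hhalf : ((1:ENNReal)/2).toReal = (1/2 : ℝ) := by
    rw [ENNReal.toReal_div]; norm_num
  rw [hhalf]
  have hpow : (2:ℝ)^k = 2 * 2^(2*m) := by rw [hk, pow_succ]; ring
  have h2k : (0:ℝ) < 2^k := by positivity
  rw [div_pow, one_pow]
  field_simp
  nlinarith [hNr, hpow, h2k]
end

section
/- For every integer m with 1 ≤ m ≤ 99, P(X_{2m+1} < 0 | X_{2m} < 0) = 1; that is, conditional on a net loss at toss 2m, a net loss at toss 2m+1 is certain. (The conditioning event has positive probability since P(X_{2m} < 0) ≥ 2^{-2m}.) -/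
open MeasureTheory ProbabilityTheory

/-- Key deterministic lemma: if all factors are `0.99` or `1.01` and the running product
up to `2m` exceeds `1`, then the product up to `2m+1` also exceeds `1`, for `1 ≤ m ≤ 99`. -/
lemma cpdo_key_det (m : ℕ) (hm1 : 1 ≤ m) (hm : m ≤ 99) (c : ℕ → ℝ)
    (hc : ∀ j ∈ Finset.Icc 1 (2*m+1), c j = 0.99 ∨ c j = 1.01)
    (hP : 1 < ∏ j ∈ Finset.Icc 1 (2*m), c j) :
    1 < ∏ j ∈ Finset.Icc 1 (2*m+1), c j := by
  set S := Finset.Icc 1 (2*m) with hS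
  have hcard : S.card = 2*m := by simp [hS]
  have hsub : ∀ j ∈ S, c j = 0.99 ∨ c j = 1.01 := fun j hj => hc j (by
    simp only [hS, Finset.mem_Icc] at hj ⊢; omega)
  set a := (S.filter (fun j => c j = 0.99)).card with ha
  have hale : a ≤ 2*m := hcard ▸ Finset.card_filter_le _ _
  have hbcard : (S.filter (fun j => ¬ c j = 0.99)).card = 2*m - a := by
    have := Finset.card_filter_add_card_filter_not (s := S) (p := fun j => c j = 0.99)
    omega
  have hprod : ∏ j ∈ S, c j = 0.99 ^ a * 1.01 ^ (2*m - a) := by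
    rw [← Finset.prod_filter_mul_prod_filter_not S (fun j => c j = 0.99)]
    congr 1
    · rw [Finset.prod_congr rfl (fun j hj => (Finset.mem_filter.mp hj).2), Finset.prod_const, ha]
    · rw [Finset.prod_congr rfl (fun j hj => ?_), Finset.prod_const, hbcard]
      have hj' := Finset.mem_filter.mp hj
      rcases hsub j hj'.1 with h | h
      · exact absurd h hj'.2
      · exact h
  rw [hprod] at hP
  -- a < m
  have ham : a < m := by
    by_contra h
    push_neg at h
    have hb : 2*m - a ≤ a := by omega
    have hsplit : a = (a - (2*m - a)) + (2*m - a) := by omega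
    have hle : (0.99:ℝ) ^ a * 1.01 ^ (2*m - a) ≤ 1 := by
      calc (0.99:ℝ) ^ a * 1.01 ^ (2*m - a)
          = 0.99 ^ (a - (2*m - a)) * ((0.99*1.01) ^ (2*m - a)) := by
            rw [mul_pow, ← mul_assoc, ← pow_add, ← hsplit]
        _ ≤ 1 * 1 := by
            apply mul_le_mul _ _ (by positivity) (by norm_num)
            · exact pow_le_one₀ (by norm_num) (by norm_num)
            · exact pow_le_one₀ (by norm_num) (by norm_num)
        _ = 1 := by norm_num
    linarith
  have hb2 : a + 2 ≤ 2*m - a := by omega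
  -- the last factor
  have hS1 : ∏ j ∈ Finset.Icc 1 (2*m+1), c j = (∏ j ∈ S, c j) * c (2*m+1) := by
    rw [hS, show 2*m+1 = (2*m)+1 from rfl, Finset.prod_Icc_succ_top (by omega)]
  have hc99 : (0.99:ℝ) ≤ c (2*m+1) := by
    rcases hc (2*m+1) (by simp) with h | h <;> rw [h] <;> norm_num
  have hSpos : (0:ℝ) < ∏ j ∈ S, c j := lt_trans one_pos (hprod ▸ hP)
  rw [hS1, hprod]
  have hk : a + 2 + ((2*m - a) - (a + 2)) = 2*m - a := by omega
  calc (1:ℝ) < (0.99*1.01) ^ 99 * 1.01 := by norm_num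
    _ ≤ (0.99*1.01) ^ (a+1) * 1.01 := by
        apply mul_le_mul_of_nonneg_right _ (by norm_num)
        exact pow_le_pow_of_le_one (by norm_num) (by norm_num) (by omega)
    _ = 0.99 ^ (a+1) * 1.01 ^ (a+2) := by rw [mul_pow]; ring
    _ ≤ 0.99 ^ (a+1) * 1.01 ^ (2*m - a) := by
        apply mul_le_mul_of_nonneg_left _ (by positivity)
        exact pow_le_pow_right₀ (by norm_num) hb2
    _ = (0.99 ^ a * 1.01 ^ (2*m - a)) * 0.99 := by ring
    _ ≤ (0.99 ^ a * 1.01 ^ (2*m - a)) * c (2*m+1) := by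
        apply mul_le_mul_of_nonneg_left hc99 (le_of_lt (hprod ▸ hSpos))

/-- For the CPDO net capital driven by i.i.d. fair signs with `δ = 0.01`:
for every `1 ≤ m ≤ 99`, the conditioning event satisfies `P(X (2m) < 0) ≥ 2^{-2m} > 0` and
`P(X (2m+1) < 0 | X (2m) < 0) = 1`: conditional on a net loss at toss `2m`, a net loss at
toss `2m+1` is certain. -/
theorem cpdo_certain_loss_after_even_loss
    {Ω : Type*} [MeasureSpace Ω] [IsProbabilityMeasure (ℙ : Measure Ω)]
    (δ : ℝ) (hδ : δ = 0.01)
    (C : ℕ → Ω → ℝ)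
    (hMeas : ∀ j, Measurable (C j))
    (hIndep : iIndepFun C ℙ)
    (hHead : ∀ j, ℙ {ω | C j ω = 1} = 1/2)
    (hTail : ∀ j, ℙ {ω | C j ω = -1} = 1/2)
    (X : ℕ → Ω → ℝ)
    (hX : ∀ (k : ℕ) (ω : Ω), X k ω = 1 - ∏ j ∈ Finset.Icc 1 k, (1 - δ * C j ω)) :
    ∀ m : ℕ, 1 ≤ m → m ≤ 99 →
      ((2 : ENNReal)⁻¹) ^ (2 * m) ≤ ℙ {ω | X (2 * m) ω < 0} ∧
      ℙ[|{ω | X (2 * m) ω < 0}] {ω | X (2 * m + 1) ω < 0} = 1 := by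
  subst hδ
  intro m hm1 hm99
  have hXm : ∀ k, Measurable (X k) := by
    intro k
    have hfe : X k = fun ω => 1 - ∏ j ∈ Finset.Icc 1 k, (1 - 0.01 * C j ω) := funext (hX k)
    rw [hfe]
    exact measurable_const.sub (Finset.measurable_prod _ fun j _ =>
      measurable_const.sub ((hMeas j).const_mul _))
  have hAmeas : MeasurableSet {ω | X (2*m) ω < 0} :=
    measurableSet_lt (hXm _) measurable_const
  set A := {ω | X (2*m) ω < 0} with hA
  set B := {ω | X (2*m+1) ω < 0} with hB
  -- Part 1 : lower bound
  have hE : (⋂ j ∈ Finset.Icc 1 (2*m), C j ⁻¹' {-1}) ⊆ A := by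
    intro ω hω
    simp only [Set.mem_iInter, Set.mem_preimage, Set.mem_singleton_iff] at hω
    have hXval : X (2*m) ω = 1 - 1.01 ^ (2*m) := by
      rw [hX]
      congr 1
      have hcong : ∀ j ∈ Finset.Icc 1 (2*m), (1 - 0.01 * C j ω) = (1.01:ℝ) := by
        intro j hj; rw [hω j hj]; norm_num
      rw [Finset.prod_congr rfl hcong, Finset.prod_const]
      norm_num
    have hgt : (1:ℝ) < 1.01 ^ (2*m) := one_lt_pow₀ (by norm_num) (by omega)
    show X (2*m) ω < 0
    rw [hXval]; linarith
  have hEmeas : ℙ (⋂ j ∈ Finset.Icc 1 (2*m), C j ⁻¹' {-1}) = (2:ENNReal)⁻¹ ^ (2*m) := by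
    rw [hIndep.meas_biInter (fun j _ => ⟨{-1}, measurableSet_singleton _, rfl⟩)]
    have hval : ∀ j : ℕ, ℙ (C j ⁻¹' {-1}) = (2:ENNReal)⁻¹ := by
      intro j
      have h := hTail j
      rw [show C j ⁻¹' {-1} = {ω | C j ω = -1} from rfl, h, one_div]
    rw [Finset.prod_congr rfl fun j _ => hval j, Finset.prod_const]
    simp [Nat.card_Icc]
  have part1 : (2:ENNReal)⁻¹ ^ (2*m) ≤ ℙ A := hEmeas ▸ measure_mono hE
  refine ⟨part1, ?_⟩
  -- Part 2 : conditional probability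
  have hA0 : ℙ A ≠ 0 := by
    have hpos : (0:ENNReal) < 2⁻¹ ^ (2*m) :=
      ENNReal.pow_pos (ENNReal.inv_pos.mpr (by norm_num)) _
    exact (lt_of_lt_of_le hpos part1).ne'
  -- the bad set has measure zero
  have hnull : ∀ j : ℕ, ℙ {ω | ¬(C j ω = 1 ∨ C j ω = -1)} = 0 := by
    intro j
    have hm1' : MeasurableSet {ω | C j ω = 1} := hMeas j (measurableSet_singleton 1)
    have hm2' : MeasurableSet {ω | C j ω = -1} := hMeas j (measurableSet_singleton (-1))
    have hdis : Disjoint {ω | C j ω = 1} {ω | C j ω = -1} := by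
      rw [Set.disjoint_left]
      intro ω h1 h2
      simp only [Set.mem_setOf_eq] at h1 h2
      rw [h1] at h2; norm_num at h2
    have hu : ℙ ({ω | C j ω = 1} ∪ {ω | C j ω = -1}) = 1 := by
      rw [measure_union hdis hm2', hHead j, hTail j]
      rw [ENNReal.add_halves]
    have hset : {ω | ¬(C j ω = 1 ∨ C j ω = -1)} = ({ω | C j ω = 1} ∪ {ω | C j ω = -1})ᶜ := by
      ext ω; simp [Set.mem_union]
    rw [hset, prob_compl_eq_zero_iff (hm1'.union hm2')]
    exact hu
  have hNnull : ℙ (⋃ j ∈ Finset.Icc 1 (2*m+1), {ω | ¬(C j ω = 1 ∨ C j ω = -1)}) = 0 :=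
    measure_biUnion_null_iff (Finset.Icc 1 (2*m+1)).countable_toSet |>.mpr (fun j _ => hnull j)
  have hsubN : A \ B ⊆ ⋃ j ∈ Finset.Icc 1 (2*m+1), {ω | ¬(C j ω = 1 ∨ C j ω = -1)} := by
    intro ω hω
    by_contra hN
    simp only [Set.mem_iUnion, Set.mem_setOf_eq, not_exists, not_not] at hN
    apply hω.2
    have hc : ∀ j ∈ Finset.Icc 1 (2*m+1),
        (1 - 0.01 * C j ω) = 0.99 ∨ (1 - 0.01 * C j ω) = 1.01 := by
      intro j hj
      rcases hN j hj with h | h <;> rw [h]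
      · left; norm_num
      · right; norm_num
    have hP : 1 < ∏ j ∈ Finset.Icc 1 (2*m), (1 - 0.01 * C j ω) := by
      have h1 := hω.1
      rw [hA, Set.mem_setOf_eq, hX] at h1
      linarith
    have hkey := cpdo_key_det m hm1 hm99 _ hc hP
    show ω ∈ B
    rw [hB, Set.mem_setOf_eq, hX]
    linarith
  have hdiff0 : ℙ (A \ B) = 0 := measure_mono_null hsubN hNnull
  have hAB : ℙ (A ∩ B) = ℙ A := by
    have h := measure_diff_null (s := A) hdiff0
    rw [show A \ (A \ B) = A ∩ B from by ext ω; simp only [Set.mem_diff, Set.mem_inter_iff]; tauto]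
      at h
    exact h
  rw [cond_apply hAmeas, hAB, ENNReal.inv_mul_cancel hA0 (measure_ne_top _ _)]
end

section
/- For every integer m with 0 ≤ m ≤ 98, P(X_{2m+2} < 0 | X_{2m+1} < 0) = 1 - (1/2^{2m+1}) · C(2m+1, m+1), where C(2m+1, m+1) is the binomial coefficient. (The conditioning event has positive probability since P(X_{2m+1} < 0) ≥ 2^{-(2m+1)}.) -/
open MeasureTheory ProbabilityTheory Finset




private lemma cpdo_real_gt (a b : ℕ) (hb : b ≤ 99) (hab : b + 1 ≤ a) :
    (1:ℝ) < 1.01 ^ a * 0.99 ^ b := by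
  have h1 : (1.01:ℝ) ^ (b+1) ≤ 1.01 ^ a := by
    apply pow_le_pow_right₀ (by norm_num) hab
  have hber : (1:ℝ) + (b:ℝ) * (-0.0001) ≤ (1 + (-0.0001))^b := by
    apply one_add_mul_le_pow (by norm_num)
  have hb' : (0.9901:ℝ) ≤ 0.9999 ^ b := by
    have : ((b:ℝ)) ≤ 99 := by exact_mod_cast hb
    calc (0.9901:ℝ) ≤ 1 + (b:ℝ) * (-0.0001) := by nlinarith
    _ ≤ (1 + (-0.0001))^b := hber
    _ = 0.9999 ^ b := by norm_num
  have key : (1:ℝ) < 1.01 ^ (b+1) * 0.99 ^ b := by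
    have h2 : (1.01:ℝ)^(b+1) * 0.99^b = 1.01 * (1.01*0.99)^b := by
      rw [pow_succ, mul_pow]; ring
    rw [h2]
    have : (1.01:ℝ) * 0.99 = 0.9999 := by norm_num
    rw [this]
    nlinarith
  calc (1:ℝ) < 1.01 ^ (b+1) * 0.99 ^ b := key
  _ ≤ 1.01 ^ a * 0.99 ^ b := by
      apply mul_le_mul_of_nonneg_right h1 (by positivity)

private lemma cpdo_real_lt (a b : ℕ) (h : a < b ∨ (a = b ∧ 1 ≤ a)) :
    (1.01:ℝ) ^ a * 0.99 ^ b < 1 := by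
  obtain hab | ⟨rfl, ha⟩ := h
  · obtain ⟨k, rfl⟩ : ∃ k, b = a + (k+1) := ⟨b - a - 1, by omega⟩
    have h2 : (1.01:ℝ)^a * 0.99^(a+(k+1)) = (1.01*0.99)^a * 0.99^(k+1) := by
      rw [pow_add, mul_pow]; ring
    rw [h2]
    have h3 : ((1.01:ℝ)*0.99)^a ≤ 1 := pow_le_one₀ (by norm_num) (by norm_num)
    have h4 : (0.99:ℝ)^(k+1) ≤ 0.99 := pow_le_of_le_one (by norm_num) (by norm_num) (by omega)
    nlinarith [pow_pos (show (0:ℝ) < 0.99 by norm_num) (k+1), pow_pos (show (0:ℝ) < 1.01*0.99 by norm_num) a]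
  · have h2 : (1.01:ℝ)^a * 0.99^a = (1.01*0.99)^a := by rw [mul_pow]
    rw [h2]
    have : (1.01:ℝ)*0.99 = 0.9999 := by norm_num
    rw [this]
    calc (0.9999:ℝ)^a ≤ 0.9999 := pow_le_of_le_one (by norm_num) (by norm_num) (by omega)
    _ < 1 := by norm_num

private lemma cpdo_count_ge (n : ℕ) (t : Finset ℕ) (ht : t.card = 2*n+1) :
    ((t.powerset.filter fun u => n+1 ≤ u.card).card) = 2^(2*n) := by
  have key : ((t.powerset.filter fun u => n+1 ≤ u.card).card)
      = ((t.powerset.filter fun u => ¬ (n+1 ≤ u.card)).card) := by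
    apply Finset.card_bij' (fun u _ => t \ u) (fun u _ => t \ u)
    · intro u hu
      simp only [mem_filter, mem_powerset] at hu ⊢
      have hle := card_le_card hu.1
      refine ⟨sdiff_subset, ?_⟩
      rw [card_sdiff_of_subset hu.1]; omega
    · intro u hu
      simp only [mem_filter, mem_powerset] at hu ⊢
      have hle := card_le_card hu.1
      refine ⟨sdiff_subset, ?_⟩
      rw [card_sdiff_of_subset hu.1]; omega
    · intro u hu
      simp only [mem_filter, mem_powerset] at hu
      exact Finset.sdiff_sdiff_eq_self hu.1
    · intro u hu
      simp only [mem_filter, mem_powerset] at hu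
      exact Finset.sdiff_sdiff_eq_self hu.1
  have hsum := Finset.card_filter_add_card_filter_not (s := t.powerset)
    (p := fun u => n+1 ≤ u.card)
  rw [Finset.card_powerset, ht] at hsum
  have : 2^(2*n+1) = 2^(2*n) + 2^(2*n) := by ring
  omega

private lemma cpdo_count_eq (k : ℕ) (t : Finset ℕ) :
    ((t.powerset.filter fun u => u.card = k).card) = t.card.choose k := by
  rw [← Finset.powersetCard_eq_filter, Finset.card_powersetCard]

private lemma cpdo_choose_le (m : ℕ) : (2*m+1).choose (m+1) ≤ 2^(2*m) := by
  have h1 : (2*m+1).choose (m+1) = (2*m+1).choose m := Nat.choose_symm_half m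
  have h2 := Nat.sum_range_choose_halfway m
  have h3 : (2*m+1).choose m ≤ ∑ i ∈ range (m+1), (2*m+1).choose i :=
    Finset.single_le_sum (fun i _ => Nat.zero_le _) (by simp)
  have h4 : (4:ℕ)^m = 2^(2*m) := by rw [show (4:ℕ) = 2^2 by norm_num, ← pow_mul]
  omega

private lemma cpdo_count_ge2 (n : ℕ) (t : Finset ℕ) (ht : t.card = 2*n+1) :
    ((t.powerset.filter fun u => n+2 ≤ u.card).card) = 2^(2*n) - (2*n+1).choose (n+1) := by
  have hsplit : (t.powerset.filter fun u => n+1 ≤ u.card)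
      = (t.powerset.filter fun u => u.card = n+1) ∪ (t.powerset.filter fun u => n+2 ≤ u.card) := by
    rw [← Finset.filter_or]
    apply Finset.filter_congr
    intro u _
    constructor
    · intro h; omega
    · intro h; omega
  have hdisj : Disjoint (t.powerset.filter fun u => u.card = n+1)
      (t.powerset.filter fun u => n+2 ≤ u.card) := by
    rw [Finset.disjoint_left]
    intro u h1 h2
    simp only [mem_filter] at h1 h2
    omega
  have := cpdo_count_ge n t ht
  rw [hsplit, Finset.card_union_of_disjoint hdisj, cpdo_count_eq, ht] at this
  omega

private lemma cpdo_split (a : ℕ) (t : Finset ℕ) (ha : a ∉ t) (Q : Finset ℕ → Prop) [DecidablePred Q] :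
    (((insert a t).powerset).filter Q).card
      = (t.powerset.filter Q).card + (t.powerset.filter fun u => Q (insert a u)).card := by
  rw [Finset.powerset_insert, Finset.filter_union]
  rw [Finset.card_union_of_disjoint]
  · congr 1
    rw [Finset.filter_image, Finset.card_image_of_injOn]
    intro u hu v hv huv
    simp only [coe_filter, Set.mem_setOf_eq, mem_powerset] at hu hv
    have hau : a ∉ u := fun h => ha (hu.1 h)
    have hav : a ∉ v := fun h => ha (hv.1 h)
    have := congrArg (fun s => Finset.erase s a) huv
    simpa [Finset.erase_insert hau, Finset.erase_insert hav] using this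
  · rw [Finset.disjoint_left]
    intro u h1 h2
    simp only [mem_filter, mem_powerset, Finset.mem_image] at h1 h2
    obtain ⟨v, _, rfl⟩ := h2.1
    exact ha (h1.1 (Finset.mem_insert_self a v))

private lemma cpdo_T1 (m : ℕ) :
    (((Finset.Icc 1 (2*m+2)).powerset).filter
      (fun s => m+1 ≤ ((Finset.Icc 1 (2*m+1)).filter (· ∈ s)).card)).card = 2^(2*m+1) := by
  set t := Finset.Icc 1 (2*m+1) with hts
  have ht : t.card = 2*m+1 := by rw [hts, Nat.card_Icc]; omega
  have ha : (2*m+2) ∉ t := by simp [hts, Finset.mem_Icc]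
  have hins : Finset.Icc 1 (2*m+2) = insert (2*m+2) t := by
    ext j; simp [hts, Finset.mem_Icc, Finset.mem_insert]; omega
  rw [hins, cpdo_split _ _ ha]
  have e1 : ∀ u ∈ t.powerset, t.filter (· ∈ u) = u := by
    intro u hu
    rw [Finset.mem_powerset] at hu
    ext j; simp only [mem_filter]
    exact ⟨fun h => h.2, fun h => ⟨hu h, h⟩⟩
  have e2 : ∀ u ∈ t.powerset, t.filter (· ∈ insert (2*m+2) u) = u := by
    intro u hu
    rw [Finset.mem_powerset] at hu
    ext j; simp only [mem_filter, Finset.mem_insert]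
    constructor
    · rintro ⟨hj, h | h⟩
      · exact absurd (h ▸ hj) ha
      · exact h
    · intro h; exact ⟨hu h, Or.inr h⟩
  have r1 : (t.powerset.filter fun u => m+1 ≤ (t.filter (· ∈ u)).card)
      = t.powerset.filter fun u => m+1 ≤ u.card :=
    Finset.filter_congr (fun u hu => by rw [e1 u hu])
  have r2 : (t.powerset.filter fun u => m+1 ≤ (t.filter (· ∈ insert (2*m+2) u)).card)
      = t.powerset.filter fun u => m+1 ≤ u.card :=
    Finset.filter_congr (fun u hu => by rw [e2 u hu])
  rw [r1, r2, cpdo_count_ge m t ht]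
  ring

private lemma cpdo_T2 (m : ℕ) :
    (((Finset.Icc 1 (2*m+2)).powerset).filter
      (fun s => (m+1 ≤ ((Finset.Icc 1 (2*m+1)).filter (· ∈ s)).card)
        ∧ (m+2 ≤ ((Finset.Icc 1 (2*m+2)).filter (· ∈ s)).card))).card
      = 2^(2*m+1) - (2*m+1).choose (m+1) := by
  set t := Finset.Icc 1 (2*m+1) with hts
  have ht : t.card = 2*m+1 := by rw [hts, Nat.card_Icc]; omega
  have ha : (2*m+2) ∉ t := by simp [hts, Finset.mem_Icc]
  have hins : Finset.Icc 1 (2*m+2) = insert (2*m+2) t := by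
    ext j; simp [hts, Finset.mem_Icc, Finset.mem_insert]; omega
  rw [hins, cpdo_split _ _ ha]
  have e1 : ∀ u ∈ t.powerset, t.filter (· ∈ u) = u := by
    intro u hu
    rw [Finset.mem_powerset] at hu
    ext j; simp only [mem_filter]
    exact ⟨fun h => h.2, fun h => ⟨hu h, h⟩⟩
  have e2 : ∀ u ∈ t.powerset, t.filter (· ∈ insert (2*m+2) u) = u := by
    intro u hu
    rw [Finset.mem_powerset] at hu
    ext j; simp only [mem_filter, Finset.mem_insert]
    constructor
    · rintro ⟨hj, h | h⟩
      · exact absurd (h ▸ hj) ha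
      · exact h
    · intro h; exact ⟨hu h, Or.inr h⟩
  have e3 : ∀ u ∈ t.powerset, (insert (2*m+2) t).filter (· ∈ u) = u := by
    intro u hu
    rw [Finset.mem_powerset] at hu
    ext j; simp only [mem_filter, Finset.mem_insert]
    exact ⟨fun h => h.2, fun h => ⟨Or.inr (hu h), h⟩⟩
  have e4 : ∀ u ∈ t.powerset, (insert (2*m+2) t).filter (· ∈ insert (2*m+2) u) = insert (2*m+2) u := by
    intro u hu
    rw [Finset.mem_powerset] at hu
    ext j; simp only [mem_filter, Finset.mem_insert]
    constructor
    · exact fun h => h.2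
    · rintro (h | h)
      · exact ⟨Or.inl h, Or.inl h⟩
      · exact ⟨Or.inr (hu h), Or.inr h⟩
  have r1 : (t.powerset.filter fun u => (m+1 ≤ (t.filter (· ∈ u)).card)
        ∧ (m+2 ≤ ((insert (2*m+2) t).filter (· ∈ u)).card))
      = t.powerset.filter fun u => m+2 ≤ u.card := by
    apply Finset.filter_congr
    intro u hu
    rw [e1 u hu, e3 u hu]
    constructor
    · intro h; omega
    · intro h; omega
  have r2 : (t.powerset.filter fun u => (m+1 ≤ (t.filter (· ∈ insert (2*m+2) u)).card)
        ∧ (m+2 ≤ ((insert (2*m+2) t).filter (· ∈ insert (2*m+2) u)).card))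
      = t.powerset.filter fun u => m+1 ≤ u.card := by
    apply Finset.filter_congr
    intro u hu
    rw [e2 u hu, e4 u hu]
    have hau : (2*m+2) ∉ u := fun h => ha (Finset.mem_powerset.1 hu h)
    rw [Finset.card_insert_of_notMem hau]
    constructor
    · intro h; omega
    · intro h; omega
  rw [r1, r2, cpdo_count_ge m t ht, cpdo_count_ge2 m t ht]
  have := cpdo_choose_le m
  have h4 : (2:ℕ)^(2*m+1) = 2^(2*m) + 2^(2*m) := by ring
  omega

private lemma cpdo_event_prob {Ω : Type*} [MeasureSpace Ω] [IsProbabilityMeasure (ℙ : Measure Ω)]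
    (C : ℕ → Ω → ℝ) (hMeas : ∀ j, Measurable (C j))
    (hIndep : iIndepFun C ℙ)
    (hHead : ∀ j, ℙ {ω | C j ω = 1} = 1/2)
    (hTail : ∀ j, ℙ {ω | C j ω = -1} = 1/2)
    (N : ℕ) (E : Set Ω) (Q : Finset ℕ → Prop) [DecidablePred Q]
    (hdet : ∀ s ∈ (Finset.Icc 1 N).powerset, ∀ ω : Ω,
      (∀ j ∈ Finset.Icc 1 N, C j ω = if j ∈ s then -1 else 1) → (ω ∈ E ↔ Q s)) :
    ℙ E = (((Finset.Icc 1 N).powerset.filter Q).card : ENNReal) * 2⁻¹ ^ N := by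
  set t := Finset.Icc 1 N with hts
  set P := t.powerset with hPs
  set A : Finset ℕ → Set Ω := fun s => ⋂ j ∈ t, C j ⁻¹' {if j ∈ s then (-1:ℝ) else 1} with hAs
  have hAmem : ∀ s ω, ω ∈ A s ↔ ∀ j ∈ t, C j ω = if j ∈ s then -1 else 1 := by
    intro s ω
    simp only [hAs, Set.mem_iInter, Set.mem_preimage, Set.mem_singleton_iff]
  have hpre : ∀ (j : ℕ) (x : ℝ), C j ⁻¹' {x} = {ω | C j ω = x} := by
    intro j x; ext ω; simp [Set.mem_preimage]
  have hAprob : ∀ s, ℙ (A s) = 2⁻¹ ^ N := by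
    intro s
    have h := hIndep.measure_inter_preimage_eq_mul t
      (sets := fun j => {if j ∈ s then (-1:ℝ) else 1}) (fun i _ => measurableSet_singleton _)
    rw [hAs]
    simp only []
    rw [h]
    have : ∀ j ∈ t, ℙ (C j ⁻¹' {if j ∈ s then (-1:ℝ) else 1}) = 2⁻¹ := by
      intro j _
      by_cases hj : j ∈ s
      · rw [if_pos hj, hpre, hTail j, one_div]
      · rw [if_neg hj, hpre, hHead j, one_div]
    rw [Finset.prod_congr rfl this, Finset.prod_const, hts, Nat.card_Icc]
    congr 1
  have hAmeas : ∀ s, MeasurableSet (A s) :=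
    fun s => Finset.measurableSet_biInter t
      (fun j _ => (hMeas j) (measurableSet_singleton _))
  -- atoms are pairwise disjoint on P
  have hAdisj : ∀ s ∈ P, ∀ u ∈ P, s ≠ u → Disjoint (A s) (A u) := by
    intro s hs u hu hne
    rw [Set.disjoint_left]
    intro ω hωs hωu
    apply hne
    rw [Finset.mem_powerset] at hs hu
    ext j
    by_cases hj : j ∈ t
    · have h1 := (hAmem s ω).1 hωs j hj
      have h2 := (hAmem u ω).1 hωu j hj
      by_cases js : j ∈ s <;> by_cases ju : j ∈ u
      · simp [js, ju]
      · rw [if_pos js] at h1; rw [if_neg ju] at h2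
        exfalso; rw [h1] at h2; norm_num at h2
      · rw [if_neg js] at h1; rw [if_pos ju] at h2
        exfalso; rw [h1] at h2; norm_num at h2
      · simp [js, ju]
    · constructor
      · intro h; exact absurd h (fun h' => hj (hs h'))
      · intro h; exact absurd h (fun h' => hj (hu h'))
  -- union of atoms has full measure
  set U : Set Ω := ⋃ s ∈ P, A s with hUs
  have hUmeas : MeasurableSet U := Finset.measurableSet_biUnion P (fun s _ => hAmeas s)
  have hGsub : {ω : Ω | ∀ j ∈ t, C j ω = 1 ∨ C j ω = -1} ⊆ U := by
    intro ω hω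
    have hs0 : t.filter (fun j => C j ω = -1) ∈ P := by
      rw [hPs, Finset.mem_powerset]; exact Finset.filter_subset _ _
    apply Set.mem_biUnion hs0
    rw [hAmem]
    intro j hj
    by_cases hjf : j ∈ Finset.filter (fun j => C j ω = -1) t
    · rw [if_pos hjf]; exact (Finset.mem_filter.1 hjf).2
    · rw [if_neg hjf]
      have hjm : ¬ C j ω = -1 := fun h => hjf (Finset.mem_filter.2 ⟨hj, h⟩)
      rcases hω j hj with h | h
      · exact h
      · exact absurd h hjm
  have hGnull : ℙ {ω : Ω | ∀ j ∈ t, C j ω = 1 ∨ C j ω = -1}ᶜ = 0 := by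
    have hDfull : ∀ j, ℙ ({ω : Ω | C j ω = 1} ∪ {ω | C j ω = -1})ᶜ = 0 := by
      intro j
      have hd : Disjoint {ω : Ω | C j ω = 1} {ω | C j ω = -1} := by
        rw [Set.disjoint_left]
        intro ω h1 h2
        simp only [Set.mem_setOf_eq] at h1 h2
        rw [h1] at h2; norm_num at h2
      have hm1 : MeasurableSet {ω : Ω | C j ω = 1} := by
        rw [← hpre]; exact (hMeas j) (measurableSet_singleton _)
      have hm2 : MeasurableSet {ω : Ω | C j ω = -1} := by
        rw [← hpre]; exact (hMeas j) (measurableSet_singleton _)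
      rw [prob_compl_eq_zero_iff (hm1.union hm2), measure_union hd hm2, hHead j, hTail j,
        one_div]
      exact ENNReal.inv_two_add_inv_two
    have hcompl : {ω : Ω | ∀ j ∈ t, C j ω = 1 ∨ C j ω = -1}ᶜ
        ⊆ ⋃ j ∈ t, ({ω : Ω | C j ω = 1} ∪ {ω | C j ω = -1})ᶜ := by
      intro ω hω
      simp only [Set.mem_compl_iff, Set.mem_setOf_eq, not_forall] at hω
      obtain ⟨j, hj, hωj⟩ := hω
      apply Set.mem_biUnion hj
      simp only [Set.mem_compl_iff, Set.mem_union, Set.mem_setOf_eq]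
      tauto
    refine measure_mono_null hcompl ?_
    refine le_antisymm ?_ (by positivity)
    calc ℙ (⋃ j ∈ t, ({ω : Ω | C j ω = 1} ∪ {ω | C j ω = -1})ᶜ)
        ≤ ∑ j ∈ t, ℙ (({ω : Ω | C j ω = 1} ∪ {ω | C j ω = -1})ᶜ) :=
          measure_biUnion_finset_le t _
    _ = ∑ j ∈ t, 0 := Finset.sum_congr rfl (fun j _ => hDfull j)
    _ = 0 := by simp
  have hUnull : ℙ Uᶜ = 0 :=
    measure_mono_null (Set.compl_subset_compl.mpr hGsub) hGnull
  -- key: E ∩ A s is A s or ∅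
  have key : ∀ s ∈ P, E ∩ A s = if Q s then A s else ∅ := by
    intro s hs
    split_ifs with hQ
    · apply Set.inter_eq_right.mpr
      intro ω hω
      exact (hdet s hs ω ((hAmem s ω).1 hω)).2 hQ
    · ext ω
      simp only [Set.mem_inter_iff, Set.mem_empty_iff_false, iff_false, not_and]
      intro hE hA
      exact hQ ((hdet s hs ω ((hAmem s ω).1 hA)).1 hE)
  -- compute
  have h1 : ℙ E = ℙ (E ∩ U) := by
    have := measure_inter_add_diff (μ := ℙ) E hUmeas
    have hd0 : ℙ (E \ U) = 0 := measure_mono_null (fun ω hω => hω.2) hUnull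
    rw [hd0, add_zero] at this
    exact this.symm
  have h2 : E ∩ U = ⋃ s ∈ P, E ∩ A s := by
    rw [hUs, Set.inter_iUnion₂]
  have h3 : ℙ (⋃ s ∈ P, E ∩ A s) = ∑ s ∈ P, ℙ (E ∩ A s) := by
    apply measure_biUnion_finset
    · intro s hs u hu hne
      exact (hAdisj s (Finset.mem_coe.1 hs) u (Finset.mem_coe.1 hu) hne).mono
        Set.inter_subset_right Set.inter_subset_right
    · intro s hs
      rw [key s hs]
      split_ifs
      · exact hAmeas s
      · exact MeasurableSet.empty
  have h4 : ∀ s ∈ P, ℙ (E ∩ A s) = if Q s then 2⁻¹^N else 0 := by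
    intro s hs
    rw [key s hs]
    split_ifs
    · exact hAprob s
    · exact measure_empty
  rw [h1, h2, h3, Finset.sum_congr rfl h4, ← Finset.sum_filter,
    Finset.sum_const, nsmul_eq_mul]

private lemma cpdo_prod (δ : ℝ) (hδ : δ = 0.01) (t s : Finset ℕ) (g : ℕ → ℝ)
    (hg : ∀ j ∈ t, g j = if j ∈ s then -1 else 1) :
    ∏ j ∈ t, (1 - δ * g j)
      = 1.01 ^ ((t.filter (· ∈ s)).card) * 0.99 ^ ((t.filter (fun j => ¬ j ∈ s)).card) := by
  rw [← Finset.prod_filter_mul_prod_filter_not t (· ∈ s)]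
  congr 1
  · rw [Finset.prod_congr rfl (g := fun _ => (1.01:ℝ)) ?_, Finset.prod_const]
    intro j hj
    obtain ⟨hjt, hjs⟩ := Finset.mem_filter.1 hj
    rw [hg j hjt, if_pos hjs, hδ]; norm_num
  · rw [Finset.prod_congr rfl (g := fun _ => (0.99:ℝ)) ?_, Finset.prod_const]
    intro j hj
    obtain ⟨hjt, hjs⟩ := Finset.mem_filter.1 hj
    rw [hg j hjt, if_neg hjs, hδ]; norm_num

private lemma cpdo_ineq_odd (m a b : ℕ) (hm : m ≤ 98) (hab : a + b = 2*m+1) :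
    ((1:ℝ) < 1.01^a * 0.99^b) ↔ m+1 ≤ a := by
  constructor
  · intro h
    by_contra hc
    have hlt : a < b := by omega
    have := cpdo_real_lt a b (Or.inl hlt)
    linarith
  · intro h
    exact cpdo_real_gt a b (by omega) (by omega)

private lemma cpdo_ineq_even (m a b : ℕ) (hm : m ≤ 98) (hab : a + b = 2*m+2) :
    ((1:ℝ) < 1.01^a * 0.99^b) ↔ m+2 ≤ a := by
  constructor
  · intro h
    by_contra hc
    have hlt : a < b ∨ (a = b ∧ 1 ≤ a) := by omega
    have := cpdo_real_lt a b hlt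
    linarith
  · intro h
    exact cpdo_real_gt a b (by omega) (by omega)

private lemma cpdo_enn_half (k : ℕ) : (((2:ℕ)^k : ℕ) : ENNReal) * 2⁻¹ ^ (k+1) = 2⁻¹ := by
  rw [Nat.cast_pow, Nat.cast_ofNat, pow_succ, ← mul_assoc, ← mul_pow,
    ENNReal.mul_inv_cancel (by norm_num) (by norm_num), one_pow, one_mul]

/-- For the CPDO net capital driven by i.i.d. fair signs with `δ = 0.01`:
for every `0 ≤ m ≤ 98`, the conditioning event satisfies `P(X (2m+1) < 0) ≥ 2^{-(2m+1)} > 0`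
and `P(X (2m+2) < 0 | X (2m+1) < 0) = 1 - (1/2^(2m+1)) · C(2m+1, m+1)`. -/
theorem cpdo_loss_after_odd_loss
    {Ω : Type*} [MeasureSpace Ω] [IsProbabilityMeasure (ℙ : Measure Ω)]
    (δ : ℝ) (hδ : δ = 0.01)
    (C : ℕ → Ω → ℝ)
    (hMeas : ∀ j, Measurable (C j))
    (hIndep : iIndepFun C ℙ)
    (hHead : ∀ j, ℙ {ω | C j ω = 1} = 1/2)
    (hTail : ∀ j, ℙ {ω | C j ω = -1} = 1/2)
    (X : ℕ → Ω → ℝ)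
    (hX : ∀ (k : ℕ) (ω : Ω), X k ω = 1 - ∏ j ∈ Finset.Icc 1 k, (1 - δ * C j ω)) :
    ∀ m : ℕ, m ≤ 98 →
      ((2 : ENNReal)⁻¹) ^ (2 * m + 1) ≤ ℙ {ω | X (2 * m + 1) ω < 0} ∧
      (ℙ[|{ω | X (2 * m + 1) ω < 0}] {ω | X (2 * m + 2) ω < 0}).toReal
        = 1 - (1 / 2 ^ (2 * m + 1)) * (Nat.choose (2 * m + 1) (m + 1) : ℝ) := by
  intro m hm
  have hXmeas : ∀ k, Measurable (X k) := by
    intro k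
    have : X k = fun ω => 1 - ∏ j ∈ Finset.Icc 1 k, (1 - δ * C j ω) := funext (hX k)
    rw [this]
    apply Measurable.const_sub
    exact Finset.measurable_prod _ (fun j _ => measurable_const.sub ((hMeas j).const_mul δ))
  have hE1meas : MeasurableSet {ω : Ω | X (2*m+1) ω < 0} :=
    measurableSet_lt (hXmeas _) measurable_const
  -- determination of the two events on atoms
  have hdet1 : ∀ s ∈ (Finset.Icc 1 (2*m+2)).powerset, ∀ ω : Ω,
      (∀ j ∈ Finset.Icc 1 (2*m+2), C j ω = if j ∈ s then -1 else 1) →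
      (ω ∈ {ω : Ω | X (2*m+1) ω < 0} ↔
        m+1 ≤ ((Finset.Icc 1 (2*m+1)).filter (· ∈ s)).card) := by
    intro s hs ω hω
    have hsub : ∀ j ∈ Finset.Icc 1 (2*m+1), C j ω = if j ∈ s then -1 else 1 := by
      intro j hj
      apply hω
      rw [Finset.mem_Icc] at hj ⊢
      omega
    have hprod := cpdo_prod δ hδ (Finset.Icc 1 (2*m+1)) s (fun j => C j ω) hsub
    have hab : ((Finset.Icc 1 (2*m+1)).filter (· ∈ s)).card
        + ((Finset.Icc 1 (2*m+1)).filter (fun j => ¬ j ∈ s)).card = 2*m+1 := by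
      have h := Finset.card_filter_add_card_filter_not
        (s := Finset.Icc 1 (2*m+1)) (p := (· ∈ s))
      rw [Nat.card_Icc] at h
      omega
    rw [Set.mem_setOf_eq, hX (2*m+1) ω, hprod, sub_neg]
    exact cpdo_ineq_odd m _ _ hm hab
  have hdet2 : ∀ s ∈ (Finset.Icc 1 (2*m+2)).powerset, ∀ ω : Ω,
      (∀ j ∈ Finset.Icc 1 (2*m+2), C j ω = if j ∈ s then -1 else 1) →
      (ω ∈ {ω : Ω | X (2*m+2) ω < 0} ↔
        m+2 ≤ ((Finset.Icc 1 (2*m+2)).filter (· ∈ s)).card) := by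
    intro s hs ω hω
    have hprod := cpdo_prod δ hδ (Finset.Icc 1 (2*m+2)) s (fun j => C j ω) hω
    have hab : ((Finset.Icc 1 (2*m+2)).filter (· ∈ s)).card
        + ((Finset.Icc 1 (2*m+2)).filter (fun j => ¬ j ∈ s)).card = 2*m+2 := by
      have h := Finset.card_filter_add_card_filter_not
        (s := Finset.Icc 1 (2*m+2)) (p := (· ∈ s))
      rw [Nat.card_Icc] at h
      omega
    rw [Set.mem_setOf_eq, hX (2*m+2) ω, hprod, sub_neg]
    exact cpdo_ineq_even m _ _ hm hab
  -- probability of the conditioning event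
  have hP1 : ℙ {ω : Ω | X (2*m+1) ω < 0} = 2⁻¹ := by
    have h := cpdo_event_prob C hMeas hIndep hHead hTail (2*m+2)
      {ω : Ω | X (2*m+1) ω < 0}
      (fun s => m+1 ≤ ((Finset.Icc 1 (2*m+1)).filter (· ∈ s)).card) hdet1
    rw [cpdo_T1 m] at h
    rw [h, show 2*m+2 = (2*m+1)+1 by omega]
    exact_mod_cast cpdo_enn_half (2*m+1)
  -- probability of the intersection
  have hP12 : ℙ ({ω : Ω | X (2*m+1) ω < 0} ∩ {ω : Ω | X (2*m+2) ω < 0})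
      = ((2^(2*m+1) - (2*m+1).choose (m+1) : ℕ) : ENNReal) * 2⁻¹ ^ (2*m+2) := by
    have hdet12 : ∀ s ∈ (Finset.Icc 1 (2*m+2)).powerset, ∀ ω : Ω,
        (∀ j ∈ Finset.Icc 1 (2*m+2), C j ω = if j ∈ s then -1 else 1) →
        (ω ∈ ({ω : Ω | X (2*m+1) ω < 0} ∩ {ω : Ω | X (2*m+2) ω < 0}) ↔
          ((m+1 ≤ ((Finset.Icc 1 (2*m+1)).filter (· ∈ s)).card)
            ∧ (m+2 ≤ ((Finset.Icc 1 (2*m+2)).filter (· ∈ s)).card))) := by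
      intro s hs ω hω
      rw [Set.mem_inter_iff]
      exact and_congr (hdet1 s hs ω hω) (hdet2 s hs ω hω)
    have h := cpdo_event_prob C hMeas hIndep hHead hTail (2*m+2)
      ({ω : Ω | X (2*m+1) ω < 0} ∩ {ω : Ω | X (2*m+2) ω < 0})
      (fun s => (m+1 ≤ ((Finset.Icc 1 (2*m+1)).filter (· ∈ s)).card)
        ∧ (m+2 ≤ ((Finset.Icc 1 (2*m+2)).filter (· ∈ s)).card)) hdet12
    rw [cpdo_T2 m] at h
    exact h
  constructor
  · rw [hP1]
    calc ((2:ENNReal)⁻¹) ^ (2*m+1) ≤ 2⁻¹ ^ 1 :=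
      pow_le_pow_of_le_one (by positivity) (ENNReal.inv_le_one.2 one_le_two) (by omega)
    _ = 2⁻¹ := pow_one _
  · have hC2 : (2*m+1).choose (m+1) ≤ 2^(2*m+1) := by
      have h1 := cpdo_choose_le m
      have h2 : (2:ℕ)^(2*m+1) = 2^(2*m) + 2^(2*m) := by ring
      omega
    rw [cond_apply hE1meas ℙ, hP1, hP12, inv_inv]
    rw [ENNReal.toReal_mul, ENNReal.toReal_mul, ENNReal.toReal_pow, ENNReal.toReal_inv,
      ENNReal.toReal_ofNat, ENNReal.toReal_natCast]
    rw [Nat.cast_sub hC2, Nat.cast_pow, Nat.cast_ofNat, inv_pow]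
    have h2 : ((2:ℝ))^(2*m+2) ≠ 0 := by positivity
    have h3 : ((2:ℝ))^(2*m+1) ≠ 0 := by positivity
    field_simp
    ring
end

section
/- Let c_1 ∈ ℝ and c_2 > -1, and let k, l ≥ 1 be integers with P(X_k < -c_2) > 0. Then P(X_{k+l} ≤ -c_1 | X_k < -c_2) ≥ P(X_l < (c_2 - c_1)/(1 + c_2)). In particular (taking c_2 = 0 and c_1 = 0 or c_1 = γ respectively), P(X_{k+l} < 0 | X_k < 0) ≥ P(X_l < 0) and P(X_{k+l} ≤ -γ | X_k < 0) ≥ P(X_l ≤ -γ). -/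
open MeasureTheory ProbabilityTheory

open scoped ENNReal

namespace CPDOAux

set_option linter.unusedSectionVars false

variable {Ω : Type*} [MeasureSpace Ω] [IsProbabilityMeasure (ℙ : Measure Ω)]
variable {g : ℕ → Ω → ℝ} {u v : ℝ}


variable {Ω : Type*} [MeasureSpace Ω] [IsProbabilityMeasure (ℙ : Measure Ω)]
variable {g : ℕ → Ω → ℝ} {u v : ℝ}

lemma prodMeas (hm : ∀ i, Measurable (g i)) (s : Finset ℕ) :
    Measurable (fun ω => ∏ j ∈ s, g j ω) :=
  Finset.measurable_prod s (fun i _ => hm i)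

lemma indep_prod (hm : ∀ i, Measurable (g i))
    (hI : iIndepFun g ℙ)
    (s t : Finset ℕ) (hst : Disjoint s t) :
    IndepFun (fun ω => ∏ j ∈ s, g j ω) (fun ω => ∏ j ∈ t, g j ω) ℙ := by
  have h := hI.indepFun_finset s t hst hm
  have hφ : Measurable (fun f : s → ℝ => ∏ i, f i) :=
    Finset.measurable_prod _ (fun i _ => measurable_pi_apply i)
  have hψ : Measurable (fun f : t → ℝ => ∏ i, f i) :=
    Finset.measurable_prod _ (fun i _ => measurable_pi_apply i)
  have h2 := h.comp hφ hψ
  convert h2 using 1 <;> funext ω <;>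
    exact (Finset.prod_coe_sort _ _).symm

lemma not_uv_null (hm : ∀ i, Measurable (g i))
    (hu : ∀ j, ℙ {ω | g j ω = u} = 1/2) (hv : ∀ j, ℙ {ω | g j ω = v} = 1/2)
    (huv : u ≠ v) (j : ℕ) :
    ℙ {ω | g j ω ≠ u ∧ g j ω ≠ v} = 0 := by
  have hmu : MeasurableSet {ω | g j ω = u} :=
    measurableSet_eq_fun (hm j) measurable_const
  have hmv : MeasurableSet {ω | g j ω = v} :=
    measurableSet_eq_fun (hm j) measurable_const
  have hd : Disjoint {ω | g j ω = u} {ω | g j ω = v} := by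
    rw [Set.disjoint_left]
    rintro ω h1 h2
    exact huv (by rw [← h1, ← h2])
  have hunion : ℙ ({ω | g j ω = u} ∪ {ω | g j ω = v}) = 1 := by
    rw [measure_union hd hmv, hu, hv, ENNReal.div_add_div_same]
    have h2 : (1:ℝ≥0∞) + 1 = 2 := one_add_one_eq_two
    rw [h2, ENNReal.div_self two_ne_zero ENNReal.ofNat_ne_top]
  have hcompl : {ω | g j ω ≠ u ∧ g j ω ≠ v}
      = ({ω | g j ω = u} ∪ {ω | g j ω = v})ᶜ := by
    ext ω; simp [not_or]
  rw [hcompl, measure_compl (hmu.union hmv) (measure_ne_top _ _), hunion,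
    measure_univ, tsub_self]

lemma posAS (hm : ∀ i, Measurable (g i))
    (hu : ∀ j, ℙ {ω | g j ω = u} = 1/2) (hv : ∀ j, ℙ {ω | g j ω = v} = 1/2)
    (huv : u ≠ v) (hupos : 0 < u) (hvpos : 0 < v) (s : Finset ℕ) :
    ℙ {ω | ¬ (0 < ∏ j ∈ s, g j ω)} = 0 := by
  refine measure_mono_null (t := ⋃ j ∈ (s : Set ℕ), {ω | g j ω ≠ u ∧ g j ω ≠ v}) ?_ ?_
  · intro ω hω
    simp only [Set.mem_setOf_eq] at hω
    by_contra hc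
    simp only [Set.mem_iUnion, Set.mem_setOf_eq, not_exists, not_and, not_not] at hc
    apply hω
    apply Finset.prod_pos
    intro i hi
    by_cases h : g i ω = u
    · rw [h]; exact hupos
    · rw [hc i hi h]; exact hvpos
  · rw [measure_biUnion_null_iff s.countable_toSet]
    intro i _
    exact not_uv_null hm hu hv huv i

lemma atom_meas (hI : iIndepFun g ℙ)
    (hv : ∀ j, ℙ {ω | g j ω = v} = 1/2) (s : Finset ℕ) :
    ℙ (⋂ j ∈ s, {ω | g j ω = v}) = (1/2)^s.card := by
  have h := hI.measure_inter_preimage_eq_mul s (sets := fun _ => {v})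
    (fun i _ => measurableSet_singleton v)
  have hset : (⋂ j ∈ s, {ω | g j ω = v}) = ⋂ j ∈ s, g j ⁻¹' {v} := by
    simp only [Set.preimage, Set.mem_singleton_iff]
  rw [hset, h, Finset.prod_congr rfl
    (fun i _ => show ℙ (g i ⁻¹' {v}) = 1/2 from by
      simpa only [Set.preimage, Set.mem_singleton_iff] using hv i),
    Finset.prod_const]



variable {Ω : Type*} [MeasureSpace Ω] [IsProbabilityMeasure (ℙ : Measure Ω)]
variable {g : ℕ → Ω → ℝ} {u v : ℝ}

lemma REC (hm : ∀ i, Measurable (g i))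
    (hI : iIndepFun g ℙ)
    (hu : ∀ j, ℙ {ω | g j ω = u} = 1/2) (hv : ∀ j, ℙ {ω | g j ω = v} = 1/2)
    (huv : u ≠ v) (n m : ℕ) (S : Set ℝ) (hS : MeasurableSet S) :
    ℙ {ω | (∏ j ∈ Finset.Ioc n (n + (m+1)), g j ω) ∈ S}
      = (1/2) * ℙ {ω | (∏ j ∈ Finset.Ioc n (n + m), g j ω) ∈ (fun x => x * u) ⁻¹' S}
      + (1/2) * ℙ {ω | (∏ j ∈ Finset.Ioc n (n + m), g j ω) ∈ (fun x => x * v) ⁻¹' S} := by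
  set Y : Ω → ℝ := fun ω => ∏ j ∈ Finset.Ioc n (n + m), g j ω with hY
  set W : Ω → ℝ := g (n + m + 1) with hW
  have hYmeas : Measurable Y := prodMeas hm _
  have hYW : IndepFun Y W ℙ := by
    have h := hI.indepFun_finsetProd_of_notMem hm
      (s := Finset.Ioc n (n+m)) (i := n+m+1) (by simp)
    have : (∏ j ∈ Finset.Ioc n (n+m), g j) = Y := by
      funext ω; simp [hY]
    rwa [this] at h
  have hE : {ω | (∏ j ∈ Finset.Ioc n (n + (m+1)), g j ω) ∈ S}
      = {ω | Y ω * W ω ∈ S} := by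
    ext ω
    have : n + (m+1) = (n+m)+1 := rfl
    rw [Set.mem_setOf_eq, Set.mem_setOf_eq, this,
      Finset.prod_Ioc_succ_top (Nat.le_add_right n m)]
  -- the two pieces
  have hpiece : ∀ w : ℝ, ℙ {ω | g (n+m+1) ω = w} = 1/2 →
      ℙ ({ω | Y ω * W ω ∈ S} ∩ {ω | W ω = w})
        = ℙ {ω | Y ω ∈ (fun x => x * w) ⁻¹' S} * (1/2) := by
    intro w hw
    have hseteq : {ω | Y ω * W ω ∈ S} ∩ {ω | W ω = w}
        = Y ⁻¹' ((fun x => x * w) ⁻¹' S) ∩ W ⁻¹' {w} := by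
      ext ω
      simp only [Set.mem_inter_iff, Set.mem_setOf_eq, Set.mem_preimage,
        Set.mem_singleton_iff]
      constructor
      · rintro ⟨h1, h2⟩; rw [h2] at h1; exact ⟨h1, h2⟩
      · rintro ⟨h1, h2⟩; rw [← h2] at h1; exact ⟨h1, h2⟩
    rw [hseteq, hYW.measure_inter_preimage_eq_mul _ _
      (hS.preimage (measurable_mul_const w)) (measurableSet_singleton w)]
    have hWw : W ⁻¹' {w} = {ω | g (n+m+1) ω = w} := rfl
    rw [hWw, hw]
    rfl
  have hseteq : ∀ w : ℝ, {ω | Y ω * W ω ∈ S} ∩ {ω | W ω = w}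
      = Y ⁻¹' ((fun x => x * w) ⁻¹' S) ∩ W ⁻¹' {w} := by
    intro w
    ext ω
    simp only [Set.mem_inter_iff, Set.mem_setOf_eq, Set.mem_preimage,
      Set.mem_singleton_iff]
    constructor
    · rintro ⟨h1, h2⟩; rw [h2] at h1; exact ⟨h1, h2⟩
    · rintro ⟨h1, h2⟩; rw [← h2] at h1; exact ⟨h1, h2⟩
  rw [hE]
  set E := {ω | Y ω * W ω ∈ S} with hEdef
  have hmv' : MeasurableSet (E ∩ {ω | W ω = v}) := by
    rw [hseteq]
    exact (hYmeas ((hS.preimage (measurable_mul_const v)))).inter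
      ((hm _) (measurableSet_singleton v))
  have hdisj : Disjoint (E ∩ {ω | W ω = u}) (E ∩ {ω | W ω = v}) := by
    rw [Set.disjoint_left]
    rintro ω ⟨-, h1⟩ ⟨-, h2⟩
    exact huv (by rw [← h1, ← h2])
  have hlower : ℙ (E ∩ {ω | W ω = u}) + ℙ (E ∩ {ω | W ω = v}) ≤ ℙ E := by
    rw [← measure_union hdisj hmv']
    exact measure_mono (Set.union_subset Set.inter_subset_left Set.inter_subset_left)
  have hupper : ℙ E ≤ ℙ (E ∩ {ω | W ω = u}) + ℙ (E ∩ {ω | W ω = v}) := by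
    have hsub : E ⊆ (E ∩ {ω | W ω = u}) ∪ (E ∩ {ω | W ω = v})
        ∪ {ω | W ω ≠ u ∧ W ω ≠ v} := by
      intro ω hω
      by_cases h1 : W ω = u
      · exact Or.inl (Or.inl ⟨hω, h1⟩)
      by_cases h2 : W ω = v
      · exact Or.inl (Or.inr ⟨hω, h2⟩)
      · exact Or.inr ⟨h1, h2⟩
    calc ℙ E ≤ ℙ ((E ∩ {ω | W ω = u}) ∪ (E ∩ {ω | W ω = v})
        ∪ {ω | W ω ≠ u ∧ W ω ≠ v}) := measure_mono hsub
      _ ≤ ℙ ((E ∩ {ω | W ω = u}) ∪ (E ∩ {ω | W ω = v}))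
          + ℙ {ω | W ω ≠ u ∧ W ω ≠ v} := measure_union_le _ _
      _ ≤ ℙ (E ∩ {ω | W ω = u}) + ℙ (E ∩ {ω | W ω = v})
          + ℙ {ω | W ω ≠ u ∧ W ω ≠ v} :=
        add_le_add_left (measure_union_le _ _) _
      _ = ℙ (E ∩ {ω | W ω = u}) + ℙ (E ∩ {ω | W ω = v}) := by
        rw [not_uv_null hm hu hv huv (n+m+1), add_zero]
  have hEeq : ℙ E = ℙ (E ∩ {ω | W ω = u}) + ℙ (E ∩ {ω | W ω = v}) :=
    le_antisymm hupper hlower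
  rw [hEeq, hpiece u (hu (n+m+1)), hpiece v (hv (n+m+1))]
  ring


lemma SHIFT (hm : ∀ i, Measurable (g i))
    (hI : iIndepFun g ℙ)
    (hu : ∀ j, ℙ {ω | g j ω = u} = 1/2) (hv : ∀ j, ℙ {ω | g j ω = v} = 1/2)
    (huv : u ≠ v) (m : ℕ) :
    ∀ (S : Set ℝ), MeasurableSet S → ∀ n,
      ℙ {ω | (∏ j ∈ Finset.Ioc n (n + m), g j ω) ∈ S}
        = ℙ {ω | (∏ j ∈ Finset.Ioc 0 m, g j ω) ∈ S} := by
  induction m with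
  | zero => intro S hS n; simp
  | succ m ih =>
    intro S hS n
    have h0 : ℙ {ω | (∏ j ∈ Finset.Ioc 0 (m+1), g j ω) ∈ S}
        = ℙ {ω | (∏ j ∈ Finset.Ioc 0 (0 + (m+1)), g j ω) ∈ S} := by
      rw [Nat.zero_add]
    rw [h0, REC hm hI hu hv huv n m S hS, REC hm hI hu hv huv 0 m S hS,
      ih _ (hS.preimage (measurable_mul_const u)) n,
      ih _ (hS.preimage (measurable_mul_const v)) n,
      ih _ (hS.preimage (measurable_mul_const u)) 0,
      ih _ (hS.preimage (measurable_mul_const v)) 0]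

lemma KEY (hm : ∀ i, Measurable (g i))
    (hI : iIndepFun g ℙ)
    (hu : ∀ j, ℙ {ω | g j ω = u} = 1/2) (hv : ∀ j, ℙ {ω | g j ω = v} = 1/2)
    (huv : u ≠ v) (hupos : 0 < u) (hvpos : 0 < v)
    (k l : ℕ) (t : ℝ) (S T : Set ℝ) (hS : MeasurableSet S)
    (himp : ∀ x y : ℝ, t < x → 0 < y → y ∈ S → x * y ∈ T)
    (hA0 : ℙ {ω | t < ∏ j ∈ Finset.Ioc 0 k, g j ω} ≠ 0) :
    ℙ {ω | (∏ j ∈ Finset.Ioc 0 l, g j ω) ∈ S}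
      ≤ ℙ[|{ω | t < ∏ j ∈ Finset.Ioc 0 k, g j ω}]
          {ω | (∏ j ∈ Finset.Ioc 0 (k+l), g j ω) ∈ T} := by
  set Y : Ω → ℝ := fun ω => ∏ j ∈ Finset.Ioc 0 k, g j ω with hYdef
  set Z : Ω → ℝ := fun ω => ∏ j ∈ Finset.Ioc k (k+l), g j ω with hZdef
  have hYmeas : Measurable Y := prodMeas hm _
  have hZmeas : Measurable Z := prodMeas hm _
  set A : Set Ω := {ω | t < Y ω} with hAdef
  have hAmeas : MeasurableSet A := measurableSet_lt measurable_const hYmeas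
  have hsplit : ∀ ω, (∏ j ∈ Finset.Ioc 0 (k+l), g j ω) = Y ω * Z ω := by
    intro ω
    exact (Finset.prod_Ioc_consecutive _ (Nat.zero_le k) (Nat.le_add_right k l)).symm
  -- inclusion
  have hsub : A ∩ {ω | Z ω ∈ S} ∩ {ω | 0 < Z ω}
      ⊆ A ∩ {ω | (∏ j ∈ Finset.Ioc 0 (k+l), g j ω) ∈ T} := by
    rintro ω ⟨⟨hA, hZS⟩, hZpos⟩
    refine ⟨hA, ?_⟩
    rw [Set.mem_setOf_eq, hsplit ω]
    exact himp _ _ hA hZpos hZS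
  -- independence
  have hind : ℙ (A ∩ {ω | Z ω ∈ S}) = ℙ A * ℙ {ω | Z ω ∈ S} := by
    have h := (indep_prod hm hI (Finset.Ioc 0 k) (Finset.Ioc k (k+l))
      (by simp [Finset.disjoint_left] at *; omega)).measure_inter_preimage_eq_mul
      (Set.Ioi t) S measurableSet_Ioi hS
    exact h
  -- null set
  have hnull : ℙ {ω | ¬ (0 < Z ω)} = 0 := posAS hm hu hv huv hupos hvpos _
  have hlow : ℙ A * ℙ {ω | Z ω ∈ S} ≤ ℙ (A ∩ {ω | (∏ j ∈ Finset.Ioc 0 (k+l), g j ω) ∈ T}) := by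
    rw [← hind]
    calc ℙ (A ∩ {ω | Z ω ∈ S})
        ≤ ℙ ((A ∩ {ω | Z ω ∈ S} ∩ {ω | 0 < Z ω}) ∪ {ω | ¬ (0 < Z ω)}) := by
          apply measure_mono
          intro ω hω
          by_cases h : 0 < Z ω
          · exact Or.inl ⟨hω, h⟩
          · exact Or.inr h
      _ ≤ ℙ (A ∩ {ω | Z ω ∈ S} ∩ {ω | 0 < Z ω}) + ℙ {ω | ¬ (0 < Z ω)} :=
          measure_union_le _ _
      _ = ℙ (A ∩ {ω | Z ω ∈ S} ∩ {ω | 0 < Z ω}) := by rw [hnull, add_zero]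
      _ ≤ _ := measure_mono hsub
  -- conditional probability
  rw [cond_apply hAmeas]
  have hshift : ℙ {ω | Z ω ∈ S} = ℙ {ω | (∏ j ∈ Finset.Ioc 0 l, g j ω) ∈ S} := by
    have := SHIFT hm hI hu hv huv l S hS k
    simpa using this
  rw [← hshift]
  have h1 : ℙ {ω | Z ω ∈ S} = (ℙ A)⁻¹ * (ℙ A * ℙ {ω | Z ω ∈ S}) := by
    rw [← mul_assoc, ENNReal.inv_mul_cancel hA0 (measure_ne_top _ _), one_mul]
  rw [h1]
  exact mul_le_mul_right hlow _


end CPDOAux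

open MeasureTheory ProbabilityTheory CPDOAux

/-- For the CPDO net capital driven by i.i.d. fair signs with `δ = 0.01`
and `γ = 0.1`: if `c₁ ∈ ℝ`, `c₂ > -1`, `k, l ≥ 1` and `P(X k < -c₂) > 0`, then
`P(X (k+l) ≤ -c₁ | X k < -c₂) ≥ P(X l < (c₂ - c₁)/(1 + c₂))`; in particular
`P(X (k+l) < 0 | X k < 0) ≥ P(X l < 0)` and `P(X (k+l) ≤ -γ | X k < 0) ≥ P(X l ≤ -γ)`. -/
theorem cpdo_memory_inequalities
    {Ω : Type*} [MeasureSpace Ω] [IsProbabilityMeasure (ℙ : Measure Ω)]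
    (δ γ : ℝ) (hδ : δ = 0.01) (hγ : γ = 0.1)
    (C : ℕ → Ω → ℝ)
    (hMeas : ∀ j, Measurable (C j))
    (hIndep : iIndepFun C ℙ)
    (hHead : ∀ j, ℙ {ω | C j ω = 1} = 1/2)
    (hTail : ∀ j, ℙ {ω | C j ω = -1} = 1/2)
    (X : ℕ → Ω → ℝ)
    (hX : ∀ (k : ℕ) (ω : Ω), X k ω = 1 - ∏ j ∈ Finset.Icc 1 k, (1 - δ * C j ω))
    (c₁ c₂ : ℝ) (hc₂ : -1 < c₂) (k l : ℕ) (hk : 1 ≤ k) (hl : 1 ≤ l)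
    (hpos : 0 < ℙ {ω | X k ω < -c₂}) :
    ℙ {ω | X l ω < (c₂ - c₁) / (1 + c₂)}
        ≤ ℙ[|{ω | X k ω < -c₂}] {ω | X (k + l) ω ≤ -c₁} ∧
    ℙ {ω | X l ω < 0} ≤ ℙ[|{ω | X k ω < 0}] {ω | X (k + l) ω < 0} ∧
    ℙ {ω | X l ω ≤ -γ} ≤ ℙ[|{ω | X k ω < 0}] {ω | X (k + l) ω ≤ -γ} := by
  have hδ0 : δ ≠ 0 := by rw [hδ]; norm_num
  set g : ℕ → Ω → ℝ := fun j ω => 1 - δ * C j ω with hg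
  set u : ℝ := 1 - δ with hu'
  set v : ℝ := 1 + δ with hv'
  have hm : ∀ i, Measurable (g i) := fun i =>
    measurable_const.sub (measurable_const.mul (hMeas i))
  have hgI : iIndepFun g ℙ :=
    hIndep.comp (fun _ x => 1 - δ * x)
      (fun _ => measurable_const.sub (measurable_const.mul measurable_id))
  have hu : ∀ j, ℙ {ω | g j ω = u} = 1/2 := by
    intro j
    have hset : {ω | g j ω = u} = {ω | C j ω = 1} := by
      ext ω
      simp only [Set.mem_setOf_eq, hg, hu']
      constructor
      · intro h
        have h2 : δ * C j ω = δ * 1 := by linarith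
        exact mul_left_cancel₀ hδ0 h2
      · intro h; rw [h]; ring
    rw [hset]; exact hHead j
  have hv : ∀ j, ℙ {ω | g j ω = v} = 1/2 := by
    intro j
    have hset : {ω | g j ω = v} = {ω | C j ω = -1} := by
      ext ω
      simp only [Set.mem_setOf_eq, hg, hv']
      constructor
      · intro h
        have h2 : δ * C j ω = δ * (-1) := by linarith
        exact mul_left_cancel₀ hδ0 h2
      · intro h; rw [h]; ring
    rw [hset]; exact hTail j
  have huv : u ≠ v := by rw [hu', hv', hδ]; norm_num
  have hupos : 0 < u := by rw [hu', hδ]; norm_num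
  have hvpos : 0 < v := by rw [hv', hδ]; norm_num
  have hIcc : ∀ m : ℕ, Finset.Icc 1 m = Finset.Ioc 0 m := fun m =>
    Finset.Icc_add_one_left_eq_Ioc 0 m
  have hlt : ∀ (m : ℕ) (r : ℝ), {ω | X m ω < r}
      = {ω | 1 - r < ∏ j ∈ Finset.Ioc 0 m, g j ω} := by
    intro m r
    ext ω
    simp only [Set.mem_setOf_eq, hX, hIcc, hg]
    constructor <;> intro h <;> linarith
  have hle : ∀ (m : ℕ) (r : ℝ), {ω | X m ω ≤ r}
      = {ω | (∏ j ∈ Finset.Ioc 0 m, g j ω) ∈ Set.Ici (1 - r)} := by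
    intro m r
    ext ω
    simp only [Set.mem_setOf_eq, hX, hIcc, hg, Set.mem_Ici]
    constructor <;> intro h <;> linarith
  have hc₂pos : (0:ℝ) < 1 + c₂ := by linarith
  -- positivity of the events conditioned on
  have hA1 : {ω | X k ω < -c₂} = {ω | 1 + c₂ < ∏ j ∈ Finset.Ioc 0 k, g j ω} := by
    rw [hlt]
    have : (1:ℝ) - (-c₂) = 1 + c₂ := by ring
    rw [this]
  have hA2 : {ω | X k ω < 0} = {ω | (1:ℝ) < ∏ j ∈ Finset.Ioc 0 k, g j ω} := by
    rw [hlt]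
    have : (1:ℝ) - 0 = 1 := by ring
    rw [this]
  have hpos1 : ℙ {ω | 1 + c₂ < ∏ j ∈ Finset.Ioc 0 k, g j ω} ≠ 0 := by
    rw [← hA1]; exact hpos.ne'
  have hpos2 : ℙ {ω | (1:ℝ) < ∏ j ∈ Finset.Ioc 0 k, g j ω} ≠ 0 := by
    have hsub : (⋂ j ∈ Finset.Ioc 0 k, {ω | g j ω = v})
        ⊆ {ω | (1:ℝ) < ∏ j ∈ Finset.Ioc 0 k, g j ω} := by
      intro ω hω
      simp only [Set.mem_iInter, Set.mem_setOf_eq] at hω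
      have hprod : ∏ j ∈ Finset.Ioc 0 k, g j ω = v ^ (Finset.Ioc 0 k).card := by
        rw [Finset.prod_congr rfl (fun i hi => hω i hi), Finset.prod_const]
      rw [Set.mem_setOf_eq, hprod]
      have hv1 : (1:ℝ) < v := by rw [hv', hδ]; norm_num
      have hcard : (Finset.Ioc 0 k).card ≠ 0 := by
        rw [Nat.card_Ioc]; omega
      exact one_lt_pow₀ hv1 hcard
    have h1 : (0:ℝ≥0∞) < (1/2)^(Finset.Ioc 0 k).card := by
      apply ENNReal.pow_pos; norm_num
    have h2 := atom_meas (g := g) hgI hv (Finset.Ioc 0 k)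
    have h3 : 0 < ℙ {ω | (1:ℝ) < ∏ j ∈ Finset.Ioc 0 k, g j ω} :=
      lt_of_lt_of_le (h2 ▸ h1) (measure_mono hsub)
    exact h3.ne'
  refine ⟨?_, ?_, ?_⟩
  · -- claim 1
    have hconst : {ω | X l ω < (c₂ - c₁) / (1 + c₂)}
        = {ω | (∏ j ∈ Finset.Ioc 0 l, g j ω) ∈ Set.Ioi ((1 + c₁) / (1 + c₂))} := by
      rw [hlt]
      ext ω
      simp only [Set.mem_setOf_eq, Set.mem_Ioi]
      have : (1:ℝ) - (c₂ - c₁) / (1 + c₂) = (1 + c₁) / (1 + c₂) := by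
        field_simp
        ring
      rw [this]
    have htgt : {ω | X (k + l) ω ≤ -c₁}
        = {ω | (∏ j ∈ Finset.Ioc 0 (k + l), g j ω) ∈ Set.Ici (1 + c₁)} := by
      rw [hle]
      have : (1:ℝ) - (-c₁) = 1 + c₁ := by ring
      rw [this]
    rw [hconst, hA1, htgt]
    apply KEY hm hgI hu hv huv hupos hvpos k l (1 + c₂) _ _ measurableSet_Ioi _ hpos1
    intro x y hx hy hyS
    simp only [Set.mem_Ioi] at hyS
    simp only [Set.mem_Ici]
    have h3 : 1 + c₁ < y * (1 + c₂) := (div_lt_iff₀ hc₂pos).mp hyS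
    nlinarith [mul_pos hy (sub_pos.mpr hx)]
  · -- claim 2
    have hl0 : {ω | X l ω < 0}
        = {ω | (∏ j ∈ Finset.Ioc 0 l, g j ω) ∈ Set.Ioi (1:ℝ)} := by
      rw [hlt]
      ext ω
      simp only [Set.mem_setOf_eq, Set.mem_Ioi]
      have : (1:ℝ) - 0 = 1 := by ring
      rw [this]
    have htgt : {ω | X (k + l) ω < 0}
        = {ω | (∏ j ∈ Finset.Ioc 0 (k + l), g j ω) ∈ Set.Ioi (1:ℝ)} := by
      rw [hlt]
      ext ω
      simp only [Set.mem_setOf_eq, Set.mem_Ioi]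
      have : (1:ℝ) - 0 = 1 := by ring
      rw [this]
    rw [hl0, hA2, htgt]
    apply KEY hm hgI hu hv huv hupos hvpos k l 1 _ _ measurableSet_Ioi _ hpos2
    intro x y hx hy hyS
    simp only [Set.mem_Ioi] at hyS ⊢
    nlinarith
  · -- claim 3
    have hγ1 : (0:ℝ) < γ := by rw [hγ]; norm_num
    have hl0 : {ω | X l ω ≤ -γ}
        = {ω | (∏ j ∈ Finset.Ioc 0 l, g j ω) ∈ Set.Ici (1 + γ)} := by
      rw [hle]
      have : (1:ℝ) - (-γ) = 1 + γ := by ring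
      rw [this]
    have htgt : {ω | X (k + l) ω ≤ -γ}
        = {ω | (∏ j ∈ Finset.Ioc 0 (k + l), g j ω) ∈ Set.Ici (1 + γ)} := by
      rw [hle]
      have : (1:ℝ) - (-γ) = 1 + γ := by ring
      rw [this]
    rw [hl0, hA2, htgt]
    apply KEY hm hgI hu hv huv hupos hvpos k l 1 _ _ measurableSet_Ici _ hpos2
    intro x y hx hy hyS
    simp only [Set.mem_Ici] at hyS ⊢
    nlinarith [mul_pos hy (sub_pos.mpr hx)]
end

section
/- Let τ be the first toss k ≥ 1 at which X_k ≤ -γ or X_k ≥ 1-γ (the termination time of the CPDO game under the Cash-Out rule and the modified Cash-In rule). Then τ is almost surely finite, and the probability that the game ends in Cash-In satisfies P(X_τ ≥ 1-γ) ≤ γ + δ + γδ = 0.111; equivalently, the probability of Cash-Out is at least 0.889. -/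
open MeasureTheory ProbabilityTheory Filter MeasurableSpace

/-- For the CPDO net capital driven by i.i.d. fair signs with `δ = 0.01`
and `γ = 0.1`, let `τ` be the first toss `k ≥ 1` at which `X k ≤ -γ` (Cash-Out) or
`X k ≥ 1 - γ` (modified Cash-In). Then `τ` is almost surely finite (almost surely some such
toss exists), the probability of Cash-In satisfies
`P(X τ ≥ 1 - γ) ≤ γ + δ + γδ = 0.111`, and hence the probability of Cash-Out is at least
`0.889`. -/
theorem cpdo_cash_in_probability_bound
    {Ω : Type*} [MeasureSpace Ω] [IsProbabilityMeasure (ℙ : Measure Ω)]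
    (δ γ : ℝ) (hδ : δ = 0.01) (hγ : γ = 0.1)
    (C : ℕ → Ω → ℝ)
    (hMeas : ∀ j, Measurable (C j))
    (hIndep : iIndepFun C ℙ)
    (hHead : ∀ j, ℙ {ω | C j ω = 1} = 1/2)
    (hTail : ∀ j, ℙ {ω | C j ω = -1} = 1/2)
    (X : ℕ → Ω → ℝ)
    (hX : ∀ (k : ℕ) (ω : Ω), X k ω = 1 - ∏ j ∈ Finset.Icc 1 k, (1 - δ * C j ω))
    (τ : Ω → ℕ)
    (hτ : ∀ ω : Ω, τ ω = sInf {k : ℕ | 1 ≤ k ∧ (X k ω ≤ -γ ∨ 1 - γ ≤ X k ω)}) :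
    ℙ {ω | ∃ k : ℕ, 1 ≤ k ∧ (X k ω ≤ -γ ∨ 1 - γ ≤ X k ω)} = 1 ∧
    (ℙ {ω | 1 - γ ≤ X (τ ω) ω}).toReal ≤ γ + δ + γ * δ ∧
    γ + δ + γ * δ = 0.111 ∧
    0.889 ≤ (ℙ {ω | X (τ ω) ω ≤ -γ}).toReal := by
  subst hδ hγ
  -- The multiplicative process `M`.
  set M : ℕ → Ω → ℝ := fun k ω => ∏ j ∈ Finset.Icc 1 k, (1 - (0.01:ℝ) * C j ω) with hMdef
  have hXM : ∀ k ω, X k ω = 1 - M k ω := fun k ω => hX k ω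
  have hM0 : ∀ ω, M 0 ω = 1 := by intro ω; simp [hMdef]
  have hMsucc : ∀ k ω, M (k+1) ω = M k ω * (1 - 0.01 * C (k+1) ω) := by
    intro k ω
    simp only [hMdef]
    rw [Finset.prod_Icc_succ_top (by omega : 1 ≤ k + 1)]
  set S : Set ℝ := Set.Iic 0.1 ∪ Set.Ici 1.1 with hSdef
  have hSmeas : MeasurableSet S := measurableSet_Iic.union measurableSet_Ici
  have hmemS : ∀ x : ℝ, x ∈ S ↔ (x ≤ 0.1 ∨ 1.1 ≤ x) := by
    intro x; simp [hSdef, Set.mem_union, Set.mem_Iic, Set.mem_Ici]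
  have hcond : ∀ k ω, (X k ω ≤ -(0.1:ℝ) ∨ 1 - 0.1 ≤ X k ω) ↔ M k ω ∈ S := by
    intro k ω
    rw [hXM, hmemS]
    constructor
    · rintro (h | h)
      · right; linarith
      · left; linarith
    · rintro (h | h)
      · right; linarith
      · left; linarith
  have hnotS : ∀ {x : ℝ}, x ∉ S → 0.1 < x ∧ x < 1.1 := by
    intro x hx
    rw [hmemS, not_or, not_le, not_le] at hx
    exact hx
  -- a.e. the coins are ±1
  have hpre1 : ∀ j, MeasurableSet {ω | C j ω = 1} :=
    fun j => hMeas j (measurableSet_singleton 1)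
  have hpre2 : ∀ j, MeasurableSet {ω | C j ω = -1} :=
    fun j => hMeas j (measurableSet_singleton (-1))
  have hdisj : ∀ j, Disjoint {ω | C j ω = 1} {ω | C j ω = -1} := by
    intro j
    rw [Set.disjoint_left]
    intro ω h1 h2
    simp only [Set.mem_setOf_eq] at h1 h2
    rw [h1] at h2; norm_num at h2
  have hunion : ∀ j, ℙ ({ω | C j ω = 1} ∪ {ω | C j ω = -1}) = 1 := by
    intro j
    rw [measure_union (hdisj j) (hpre2 j), hHead j, hTail j]
    rw [ENNReal.div_add_div_same]
    norm_num
    exact ENNReal.div_self (by norm_num) (by norm_num)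
  have hae : ∀ᵐ ω ∂(ℙ : Measure Ω), ∀ j, C j ω = 1 ∨ C j ω = -1 := by
    rw [ae_all_iff]
    intro j
    rw [ae_iff]
    have : {ω | ¬(C j ω = 1 ∨ C j ω = -1)} = ({ω | C j ω = 1} ∪ {ω | C j ω = -1})ᶜ := by
      ext ω; simp [not_or]
    rw [this, measure_compl ((hpre1 j).union (hpre2 j)) (measure_ne_top _ _), hunion j]
    simp
  -- pointwise consequences on the good set
  have hfac : ∀ ω, (∀ j, C j ω = 1 ∨ C j ω = -1) →
      ∀ j, (0.99:ℝ) ≤ 1 - 0.01 * C j ω ∧ 1 - 0.01 * C j ω ≤ 1.01 := by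
    rintro ω h j
    rcases h j with h' | h' <;> rw [h'] <;> norm_num
  have hMpos : ∀ ω, (∀ j, C j ω = 1 ∨ C j ω = -1) → ∀ k, 0 < M k ω := by
    intro ω h k
    refine Finset.prod_pos fun j _ => ?_
    have := (hfac ω h j).1; linarith
  have hMle : ∀ ω, (∀ j, C j ω = 1 ∨ C j ω = -1) → ∀ k, M k ω ≤ 1.01 ^ k := by
    intro ω h k
    have : M k ω ≤ ∏ j ∈ Finset.Icc 1 k, (1.01:ℝ) := by
      refine Finset.prod_le_prod (fun j _ => by have := (hfac ω h j).1; linarith)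
        (fun j _ => (hfac ω h j).2)
    simpa [Finset.prod_const, Nat.card_Icc] using this
  have hMmeas : ∀ k, Measurable (M k) := by
    intro k
    exact Finset.measurable_prod _ fun j _ => measurable_const.sub ((hMeas j).const_mul _)
  have hMint : ∀ k, Integrable (M k) ℙ := by
    intro k
    refine Integrable.mono' (integrable_const ((1.01:ℝ) ^ k))
      (hMmeas k).aestronglyMeasurable ?_
    filter_upwards [hae] with ω hω
    rw [Real.norm_eq_abs, abs_of_pos (hMpos ω hω k)]
    exact hMle ω hω k
  -- coin integrability and mean
  have hCint : ∀ j, Integrable (C j) ℙ := by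
    intro j
    refine Integrable.mono' (integrable_const (1:ℝ)) (hMeas j).aestronglyMeasurable ?_
    filter_upwards [hae] with ω hω
    rcases hω j with h | h <;> rw [h] <;> norm_num
  have hCmean : ∀ j, ∫ ω, C j ω ∂ℙ = 0 := by
    intro j
    have haeu : ∀ᵐ ω ∂(ℙ : Measure Ω), ω ∈ {ω | C j ω = 1} ∪ {ω | C j ω = -1} := by
      rw [ae_iff]
      have : {ω | ¬ ω ∈ ({ω | C j ω = 1} ∪ {ω | C j ω = -1})} =
          ({ω | C j ω = 1} ∪ {ω | C j ω = -1})ᶜ := rfl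
      rw [this, measure_compl ((hpre1 j).union (hpre2 j)) (measure_ne_top _ _), hunion j]
      simp
    have heq : C j =ᵐ[ℙ] fun ω =>
        ({ω | C j ω = 1}.indicator (fun _ => (1:ℝ)) ω +
         {ω | C j ω = -1}.indicator (fun _ => (-1:ℝ)) ω) := by
      filter_upwards [haeu] with ω hω
      rcases hω with h | h
      · have h2 : ω ∉ {ω | C j ω = -1} := by
          simp only [Set.mem_setOf_eq] at h ⊢
          rw [h]; norm_num
        simp only [Set.mem_setOf_eq] at h
        rw [Set.indicator_of_mem (by exact h) , Set.indicator_of_notMem h2]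
        simpa using h
      · have h1 : ω ∉ {ω | C j ω = 1} := by
          simp only [Set.mem_setOf_eq] at h ⊢
          rw [h]; norm_num
        simp only [Set.mem_setOf_eq] at h
        rw [Set.indicator_of_notMem h1, Set.indicator_of_mem (by exact h)]
        simpa using h
    rw [integral_congr_ae heq, integral_add
      ((integrable_const (1:ℝ)).indicator (hpre1 j))
      ((integrable_const (-1:ℝ)).indicator (hpre2 j)),
      integral_indicator_const _ (hpre1 j), integral_indicator_const _ (hpre2 j),
      measureReal_def, measureReal_def, hHead j, hTail j]
    simp
  -- the natural filtration
  have hSM : ∀ j, StronglyMeasurable (C j) := fun j => (hMeas j).stronglyMeasurable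
  set ℱ : Filtration ℕ _ := Filtration.natural C hSM with hFdef
  have hadapC : StronglyAdapted ℱ C := Filtration.stronglyAdapted_natural hSM
  have hadapM : StronglyAdapted ℱ M := by
    intro k
    refine Measurable.stronglyMeasurable ?_
    refine Finset.measurable_prod _ fun j hj => ?_
    have hjk : j ≤ k := (Finset.mem_Icc.mp hj).2
    have hCj : StronglyMeasurable[ℱ k] (C j) := ((hadapC j).mono (ℱ.mono hjk))
    exact measurable_const.sub (hCj.measurable.const_mul _)
  -- M is a martingale
  have hmart : Martingale M ℱ ℙ := by
    refine martingale_nat hadapM hMint fun n => ?_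
    set g : Ω → ℝ := fun ω => 1 - 0.01 * C (n+1) ω with hgdef
    have hgmeas : Measurable g := measurable_const.sub ((hMeas (n+1)).const_mul _)
    have hgint : Integrable g ℙ :=
      (integrable_const (1:ℝ)).sub ((hCint (n+1)).const_mul _)
    have hsplit : M (n+1) = M n * g := funext fun ω => hMsucc n ω
    have hindepg : Indep (MeasurableSpace.comap g inferInstance) (ℱ n) ℙ := by
      have base : Indep (MeasurableSpace.comap (C (n+1)) inferInstance) (ℱ n) ℙ :=
        hIndep.indep_comap_natural_of_lt hSM (Nat.lt_succ_self n)
      refine indep_of_indep_of_le_left base ?_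
      have hφ : Measurable fun x : ℝ => 1 - (0.01:ℝ) * x :=
        measurable_const.sub (measurable_id.const_mul _)
      have hgeq : g = (fun x : ℝ => 1 - (0.01:ℝ) * x) ∘ C (n+1) := rfl
      have : MeasurableSpace.comap g inferInstance =
          MeasurableSpace.comap (C (n+1))
            (MeasurableSpace.comap (fun x : ℝ => 1 - (0.01:ℝ) * x) inferInstance) := by
        rw [hgeq, ← MeasurableSpace.comap_comp]
      rw [this]
      exact MeasurableSpace.comap_mono hφ.comap_le
    have hcond_g : (ℙ : Measure Ω)[g | ℱ n] =ᵐ[ℙ] fun _ => ∫ ω, g ω ∂ℙ := by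
      exact condExp_indep_eq hgmeas.comap_le (ℱ.le n)
        (Measurable.stronglyMeasurable (comap_measurable g)) hindepg
    have hEg : ∫ ω, g ω ∂ℙ = 1 := by
      rw [hgdef]
      rw [integral_sub (integrable_const _) ((hCint (n+1)).const_mul _)]
      rw [integral_const, integral_const_mul, hCmean (n+1)]
      simp
    have hpull : (ℙ : Measure Ω)[M (n+1) | ℱ n] =ᵐ[ℙ] M n * (ℙ : Measure Ω)[g | ℱ n] := by
      rw [hsplit]
      exact condExp_mul_of_stronglyMeasurable_left (hadapM n) (hsplit ▸ hMint (n+1)) hgint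
    refine EventuallyEq.symm (hpull.trans ?_)
    filter_upwards [hcond_g] with ω hω
    simp only [Pi.mul_apply, hω, hEg, mul_one]
  -- stopping times and stopped values
  have hstop : ∀ n : ℕ, IsStoppingTime ℱ (fun ω => (hittingBtwn M S 1 n ω : ℕ)) :=
    fun n => hadapM.adapted.isStoppingTime_hittingBtwn hSmeas
  set Y : ℕ → Ω → ℝ := fun n => stoppedValue M (fun ω => (hittingBtwn M S 1 n ω : ℕ)) with hYdef
  have hYint : ∀ n, Integrable (Y n) ℙ := fun n =>
    integrable_stoppedValue ℕ (hstop n) hMint (fun ω => WithTop.coe_le_coe.mpr (hittingBtwn_le ω))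
  have hEY : ∀ n, ∫ ω, Y n ω ∂ℙ = 1 := by
    intro n
    have h0 : stoppedValue M (fun _ => (0:ℕ)) = fun _ => (1:ℝ) := by
      show (fun ω => M 0 ω) = _
      exact funext hM0
    have hbase : ∫ ω, stoppedValue M (fun _ => (0:ℕ)) ω ∂ℙ = 1 := by
      rw [h0]; simp
    have hle1 : ∫ ω, stoppedValue M (fun _ => (0:ℕ)) ω ∂ℙ ≤ ∫ ω, Y n ω ∂ℙ :=
      hmart.submartingale.expected_stoppedValue_mono (isStoppingTime_const ℱ 0)
        (hstop n) (fun ω => WithTop.coe_le_coe.mpr (Nat.zero_le _)) (fun ω => WithTop.coe_le_coe.mpr (hittingBtwn_le ω))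
    have hle2 : ∫ ω, Y n ω ∂ℙ ≤ ∫ ω, stoppedValue M (fun _ => (0:ℕ)) ω ∂ℙ := by
      have hneg := hmart.neg.submartingale.expected_stoppedValue_mono
        (isStoppingTime_const ℱ 0) (hstop n) (fun ω => WithTop.coe_le_coe.mpr (Nat.zero_le _))
        (fun ω => WithTop.coe_le_coe.mpr (hittingBtwn_le ω))
      have e1 : stoppedValue (-M) (fun _ => (0:ℕ)) = -(stoppedValue M (fun _ => (0:ℕ))) := rfl
      have e2 : stoppedValue (-M) (fun ω => (hittingBtwn M S 1 n ω : ℕ)) = -(Y n) := rfl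
      change ∫ x, (-(stoppedValue M (fun _ => (0:ℕ)))) x ∂ℙ ≤ ∫ x, (-(Y n)) x ∂ℙ at hneg
      simp only [Pi.neg_apply, integral_neg] at hneg
      linarith
    linarith [hbase, hle1, hle2]
  -- pointwise bounds on the stopped values
  have hYbdd : ∀ᵐ ω ∂(ℙ : Measure Ω), ∀ n, 0 ≤ Y n ω ∧ Y n ω ≤ 1.111 := by
    filter_upwards [hae] with ω hω
    intro n
    by_cases hex : ∃ j ∈ Set.Icc 1 n, M j ω ∈ S
    · obtain ⟨j₀, hj₀, hj₀S⟩ := hex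
      have h1n : 1 ≤ n := le_trans hj₀.1 hj₀.2
      have hh1 : 1 ≤ hittingBtwn M S 1 n ω := le_hittingBtwn h1n ω
      have hhn : hittingBtwn M S 1 n ω ≤ n := hittingBtwn_le ω
      have hmem : M (hittingBtwn M S 1 n ω) ω ∈ S := hittingBtwn_mem_set ⟨j₀, hj₀, hj₀S⟩
      set h := hittingBtwn M S 1 n ω with hh
      have hYval : Y n ω = M h ω := rfl
      have hsucc : M h ω = M (h-1) ω * (1 - 0.01 * C h ω) := by
        obtain ⟨p, hp⟩ : ∃ p, h = p + 1 := ⟨h - 1, (Nat.succ_pred_eq_of_pos hh1).symm⟩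
        rw [hp, hMsucc]
        simp
      have hprev_lt : M (h-1) ω < 1.1 := by
        rcases Nat.eq_zero_or_pos (h-1) with h0 | hpos
        · rw [h0, hM0]; norm_num
        · have hlt : h - 1 < h := Nat.sub_lt hh1 one_pos
          have hnot : M (h-1) ω ∉ S := notMem_of_lt_hittingBtwn (hh ▸ hlt) hpos
          exact (hnotS hnot).2
      have hprev_pos : 0 < M (h-1) ω := hMpos ω hω (h-1)
      have hfach := hfac ω hω h
      constructor
      · rw [hYval]; exact le_of_lt (hMpos ω hω h)
      · rw [hYval, hsucc]
        calc M (h-1) ω * (1 - 0.01 * C h ω) ≤ M (h-1) ω * 1.01 :=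
              mul_le_mul_of_nonneg_left hfach.2 (le_of_lt hprev_pos)
          _ ≤ 1.1 * 1.01 := by nlinarith
          _ ≤ 1.111 := by norm_num
    · have hval : hittingBtwn M S 1 n ω = n := by
        simp only [hittingBtwn, hex, if_false]
      have hYval : Y n ω = M n ω := by
        simp only [hYdef, stoppedValue, hval]; rfl
      rcases Nat.eq_zero_or_pos n with h0 | hpos
      · rw [hYval, h0, hM0]; norm_num
      · have hnot : M n ω ∉ S := fun hmem => hex ⟨n, ⟨hpos, le_refl n⟩, hmem⟩
        have := hnotS hnot
        constructor
        · rw [hYval]; linarith [this.1]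
        · rw [hYval]; linarith [this.2]
  -- measurability of stopped values
  have hYmeas : ∀ n, Measurable (Y n) := by
    intro n
    have := measurable_stoppedValue (hadapM.progMeasurable_of_discrete) (hstop n)
    exact this.mono (hstop n).measurableSpace_le le_rfl
  -- the nonnegative auxiliary process
  set Z : ℕ → Ω → ENNReal := fun n ω => ENNReal.ofReal (1.111 - Y n ω) with hZdef
  have hZmeas : ∀ n, Measurable (Z n) :=
    fun n => ENNReal.measurable_ofReal.comp (measurable_const.sub (hYmeas n))
  have hZlint : ∀ n, ∫⁻ ω, Z n ω ∂ℙ = ENNReal.ofReal 0.111 := by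
    intro n
    have hint : Integrable (fun ω => (1.111:ℝ) - Y n ω) ℙ := (integrable_const _).sub (hYint n)
    have hnn : 0 ≤ᵐ[ℙ] fun ω => (1.111:ℝ) - Y n ω := by
      filter_upwards [hYbdd] with ω hω
      have := (hω n).2; simp only [Pi.zero_apply]; linarith
    rw [← ofReal_integral_eq_lintegral_ofReal hint hnn]
    congr 1
    rw [integral_sub (integrable_const _) (hYint n), integral_const, hEY n]
    simp
    norm_num
  set W : Ω → ENNReal := fun ω => liminf (fun n => Z n ω) atTop with hWdef
  have hWmeas : Measurable W := Measurable.liminf hZmeas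
  have hWlint : ∫⁻ ω, W ω ∂ℙ ≤ ENNReal.ofReal 0.111 := by
    refine le_trans (lintegral_liminf_le hZmeas) ?_
    simp only [hZlint]
    rw [liminf_const]
  have hmarkov : ℙ {ω | ENNReal.ofReal 1.011 ≤ W ω} ≤ ENNReal.ofReal 0.111 := by
    have h1 : (1:ENNReal) ≤ ENNReal.ofReal 1.011 := by
      rw [← ENNReal.ofReal_one]
      exact ENNReal.ofReal_le_ofReal (by norm_num)
    calc ℙ {ω | ENNReal.ofReal 1.011 ≤ W ω}
        = 1 * ℙ {ω | ENNReal.ofReal 1.011 ≤ W ω} := (one_mul _).symm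
      _ ≤ ENNReal.ofReal 1.011 * ℙ {ω | ENNReal.ofReal 1.011 ≤ W ω} :=
          mul_le_mul_left h1 _
      _ ≤ ∫⁻ ω, W ω ∂ℙ := mul_meas_ge_le_lintegral₀ hWmeas.aemeasurable _
      _ ≤ ENNReal.ofReal 0.111 := hWlint
  -- the Cash-In event forces the liminf to be large
  have hτ' : ∀ ω, τ ω = sInf {k | 1 ≤ k ∧ M k ω ∈ S} := by
    intro ω
    rw [hτ]
    congr 1
    ext k
    exact and_congr_right fun _ => hcond k ω
  have hIn : {ω | 1 - 0.1 ≤ X (τ ω) ω} ⊆ {ω | ENNReal.ofReal 1.011 ≤ W ω} := by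
    intro ω hω
    simp only [Set.mem_setOf_eq] at hω ⊢
    have hTne : {k | 1 ≤ k ∧ M k ω ∈ S}.Nonempty := by
      by_contra hne
      rw [Set.not_nonempty_iff_eq_empty] at hne
      have h0 : τ ω = 0 := by rw [hτ' ω, hne, Nat.sInf_empty]
      rw [h0, hXM, hM0] at hω
      norm_num at hω
    have hτmem : 1 ≤ τ ω ∧ M (τ ω) ω ∈ S := by
      have := Nat.sInf_mem hTne
      rw [← hτ' ω] at this
      exact this
    have hMτ : M (τ ω) ω ≤ 0.1 := by
      rw [hXM] at hω
      linarith
    have hev : ∀ n, τ ω ≤ n → hittingBtwn M S 1 n ω = τ ω := by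
      intro n hn
      have hmemIcc : τ ω ∈ Set.Icc 1 n ∩ {i | M i ω ∈ S} :=
        ⟨⟨hτmem.1, hn⟩, hτmem.2⟩
      have hexn : ∃ j ∈ Set.Icc 1 n, M j ω ∈ S := ⟨τ ω, hmemIcc.1, hmemIcc.2⟩
      have hvaldef : hittingBtwn M S 1 n ω = sInf (Set.Icc 1 n ∩ {i | M i ω ∈ S}) := by
        simp only [hittingBtwn_def, hexn, if_true]
      rw [hvaldef]
      apply le_antisymm
      · exact Nat.sInf_le hmemIcc
      · refine le_csInf ⟨τ ω, hmemIcc⟩ fun b hb => ?_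
        rw [hτ' ω]
        exact Nat.sInf_le ⟨hb.1.1, hb.2⟩
    refine Filter.le_liminf_of_le (by isBoundedDefault) ?_
    filter_upwards [eventually_ge_atTop (τ ω)] with n hn
    have hYτ : Y n ω = M (τ ω) ω := by
      simp only [hYdef, stoppedValue, hev n hn]; rfl
    show ENNReal.ofReal 1.011 ≤ ENNReal.ofReal (1.111 - Y n ω)
    refine ENNReal.ofReal_le_ofReal ?_
    rw [hYτ]
    linarith
  have hInBound : ℙ {ω | 1 - 0.1 ≤ X (τ ω) ω} ≤ ENNReal.ofReal 0.111 :=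
    (measure_mono hIn).trans hmarkov
  have part2 : (ℙ {ω | 1 - 0.1 ≤ X (τ ω) ω}).toReal ≤ (0.1:ℝ) + 0.01 + 0.1 * 0.01 := by
    have h1 := ENNReal.toReal_mono ENNReal.ofReal_ne_top hInBound
    rw [ENNReal.toReal_ofReal (by norm_num)] at h1
    exact h1.trans (by norm_num)
  -- Part 1 : the game terminates almost surely (second Borel-Cantelli)
  set blk : ℕ → Finset ℕ := fun i => Finset.Icc (i*240+1) ((i+1)*240) with hblk
  set A : ℕ → Set Ω := fun i => ⋂ j ∈ blk i, {ω | C j ω = 1} with hA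
  have hkey : ∀ u : Finset ℕ, ℙ (⋂ j ∈ u, {ω | C j ω = 1}) = (1/2 : ENNReal) ^ u.card := by
    intro u
    have hcm : ∀ j : ℕ, MeasurableSet[MeasurableSpace.comap (C j) inferInstance]
        {ω | C j ω = 1} := fun j => ⟨{1}, measurableSet_singleton 1, rfl⟩
    rw [hIndep.meas_biInter (fun j _ => hcm j)]
    rw [Finset.prod_congr rfl (fun j _ => hHead j), Finset.prod_const]
  have hAmeas : ∀ i, MeasurableSet (A i) := by
    intro i
    exact Finset.measurableSet_biInter _ fun j _ => hpre1 j
  have hblkcard : ∀ i, (blk i).card = 240 := by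
    intro i
    rw [hblk]
    rw [Nat.card_Icc]
    omega
  have hAprob : ∀ i, ℙ (A i) = (1/2 : ENNReal) ^ 240 := by
    intro i
    rw [hA]
    rw [hkey (blk i), hblkcard i]
  have hdisjblk : ∀ (i i' : ℕ), i ≠ i' → Disjoint (blk i) (blk i') := by
    intro i i' hne
    rw [Finset.disjoint_left]
    intro a ha ha'
    rw [hblk, Finset.mem_Icc] at ha ha'
    rcases Nat.lt_or_ge i i' with h | h
    · have : i + 1 ≤ i' := h
      nlinarith [ha.1, ha.2, ha'.1, ha'.2]
    · have h' : i' < i := lt_of_le_of_ne h (Ne.symm hne)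
      have : i' + 1 ≤ i := h'
      nlinarith [ha.1, ha.2, ha'.1, ha'.2]
  have hAindep : iIndepSet A ℙ := by
    rw [iIndepSet_iff_meas_biInter hAmeas]
    intro s
    have h1 : (⋂ i ∈ s, A i) = ⋂ j ∈ s.biUnion blk, {ω | C j ω = 1} :=
      (Finset.set_biInter_biUnion s blk _).symm
    rw [h1, hkey, Finset.card_biUnion (fun i _ i' _ h => hdisjblk i i' h)]
    rw [Finset.sum_congr rfl fun i _ => hblkcard i, Finset.sum_const, smul_eq_mul]
    rw [Finset.prod_congr rfl fun i _ => hAprob i, Finset.prod_const]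
    rw [mul_comm, pow_mul]
  have hsum : (∑' i, ℙ (A i)) = ⊤ := by
    rw [tsum_congr hAprob]
    refine ENNReal.tsum_const_eq_top_of_ne_zero ?_
    refine pow_ne_zero _ ?_
    simp
  have hBC : ℙ (limsup A atTop) = 1 := measure_limsup_eq_one hAmeas hAindep hsum
  have hEsub : limsup A atTop ⊆
      {ω | ∃ k, 1 ≤ k ∧ (X k ω ≤ -(0.1:ℝ) ∨ 1 - 0.1 ≤ X k ω)} := by
    intro ω hω
    obtain ⟨i, hi⟩ := (Filter.mem_limsup_iff_frequently_mem.mp hω).exists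
    simp only [Set.mem_setOf_eq]
    by_contra hno
    push_neg at hno
    have hMin : ∀ k, 1 ≤ k → M k ω ∉ S := by
      intro k hk hmem
      have h2 := (hcond k ω).mpr hmem
      obtain ⟨ha, hb⟩ := hno k hk
      rcases h2 with h | h <;> linarith
    have hCi : ∀ j ∈ blk i, C j ω = 1 := by
      intro j hj
      rw [hA] at hi
      exact Set.mem_iInter₂.mp hi j hj
    have hm1 : i * 240 ≤ (i+1) * 240 := by nlinarith
    have hprod : M ((i+1)*240) ω = M (i*240) ω * 0.99 ^ 240 := by
      have hIcc : ∀ k : ℕ, Finset.Icc 1 k = Finset.Ioc 0 k := fun k => Finset.Icc_add_one_left_eq_Ioc 0 k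
      have hsplit : M (i*240) ω * ∏ j ∈ Finset.Ioc (i*240) ((i+1)*240), (1 - 0.01 * C j ω)
          = M ((i+1)*240) ω := by
        simp only [hMdef, hIcc]
        exact Finset.prod_Ioc_consecutive _ (Nat.zero_le _) hm1
      have hconst : ∏ j ∈ Finset.Ioc (i*240) ((i+1)*240), (1 - 0.01 * C j ω) = (0.99:ℝ)^240 := by
        have heq : ∀ j ∈ Finset.Ioc (i*240) ((i+1)*240), (1 - 0.01 * C j ω) = (0.99:ℝ) := by
          intro j hj
          rw [Finset.mem_Ioc] at hj
          have hj' : j ∈ blk i := by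
            rw [hblk, Finset.mem_Icc]; omega
          rw [hCi j hj']; norm_num
        rw [Finset.prod_congr rfl heq, Finset.prod_const]
        congr 1
        rw [Nat.card_Ioc]
        omega
      rw [← hsplit, hconst]
    have h1 : M (i*240) ω < 1.1 := by
      rcases Nat.eq_zero_or_pos (i*240) with h0 | hpos
      · rw [h0, hM0]; norm_num
      · exact (hnotS (hMin _ hpos)).2
    have h2 : 0.1 < M ((i+1)*240) ω := by
      have hpos : 1 ≤ (i+1)*240 := by nlinarith
      exact (hnotS (hMin _ hpos)).1
    have hnum : (1.1:ℝ) * 0.99 ^ 240 < 0.1 := by norm_num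
    have hppos : (0:ℝ) < 0.99 ^ 240 := by positivity
    have hmul := mul_lt_mul_of_pos_right h1 hppos
    rw [← hprod] at hmul
    linarith
  have part1 : ℙ {ω | ∃ k, 1 ≤ k ∧ (X k ω ≤ -(0.1:ℝ) ∨ 1 - 0.1 ≤ X k ω)} = 1 :=
    le_antisymm prob_le_one (hBC ▸ measure_mono hEsub)
  -- Part 4 : the Cash-Out probability
  have hcover : {ω | ∃ k, 1 ≤ k ∧ (X k ω ≤ -(0.1:ℝ) ∨ 1 - 0.1 ≤ X k ω)} ⊆
      {ω | X (τ ω) ω ≤ -(0.1:ℝ)} ∪ {ω | 1 - 0.1 ≤ X (τ ω) ω} := by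
    intro ω hω
    have hne : {k | 1 ≤ k ∧ (X k ω ≤ -(0.1:ℝ) ∨ 1 - 0.1 ≤ X k ω)}.Nonempty := hω
    have hmem := Nat.sInf_mem hne
    rw [← hτ ω] at hmem
    rcases hmem.2 with h | h
    · exact Or.inl h
    · exact Or.inr h
  have hsum1 : (1 : ENNReal) ≤ ℙ {ω | X (τ ω) ω ≤ -(0.1:ℝ)} + ℙ {ω | 1 - 0.1 ≤ X (τ ω) ω} := by
    calc (1 : ENNReal) = ℙ {ω | ∃ k, 1 ≤ k ∧ (X k ω ≤ -(0.1:ℝ) ∨ 1 - 0.1 ≤ X k ω)} := part1.symm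
      _ ≤ ℙ ({ω | X (τ ω) ω ≤ -(0.1:ℝ)} ∪ {ω | 1 - 0.1 ≤ X (τ ω) ω}) := measure_mono hcover
      _ ≤ _ := measure_union_le _ _
  have part4 : (0.889:ℝ) ≤ (ℙ {ω | X (τ ω) ω ≤ -(0.1:ℝ)}).toReal := by
    have hfin : ℙ {ω | X (τ ω) ω ≤ -(0.1:ℝ)} + ℙ {ω | 1 - 0.1 ≤ X (τ ω) ω} ≠ ⊤ :=
      ENNReal.add_ne_top.mpr ⟨measure_ne_top _ _, measure_ne_top _ _⟩
    have h1 := ENNReal.toReal_mono hfin hsum1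
    rw [ENNReal.toReal_one,
      ENNReal.toReal_add (measure_ne_top _ _) (measure_ne_top _ _)] at h1
    have h2 : (ℙ {ω | 1 - 0.1 ≤ X (τ ω) ω}).toReal ≤ 0.111 := part2.trans (by norm_num)
    linarith
  exact ⟨part1, part2, by norm_num, part4⟩
end
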